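/- arXiv:2205.12025 — 5 statements merged into one kernel-verified Lean document; each statement's English description precedes it below -/
import Mathlib

section
/- Hardy–Littlewood-type lemma (key estimate of Lemma 5.1): Let n ≥ 2, L ≥ 1, 0 ≤ β < 1 and A ≥ 0. Let g : ℝ^{n−1} → ℝ be an L-Lipschitz function and let D = {x ∈ ℝⁿ : x_n > g(x₁,…,x_{n−1})} be its open epigraph, with boundary ∂D = {x ∈ ℝⁿ : x_n = g(x₁,…,x_{n−1})}. Suppose f : D → ℝ is twice continuously differentiable on D and satisfies ‖D²f(x)‖ ≤ A · dist(x, ∂D)^{β−1} for every x ∈ D. Then there exists a constant C, depending only on n, L and β, such that |f(x+h) + f(x−h) − 2f(x)| ≤ C · A · |h|^{1+β} for all x, h ∈ ℝⁿ with x, x+h, x−h ∈ D. -/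
open Metric Set

/-- The open epigraph `{x : xₙ > g(x₁,…,x_{n-1})}` of `g : ℝ^{n-1} → ℝ` (here `n = m+1`). -/
def epigraph (m : ℕ) (g : EuclideanSpace ℝ (Fin m) → ℝ) :
    Set (EuclideanSpace ℝ (Fin (m + 1))) :=
  {x | g (WithLp.toLp 2 (fun i : Fin m => x i.castSucc)) < x (Fin.last m)}

/-- The graph `{x : xₙ = g(x₁,…,x_{n-1})}` of `g`, i.e. the boundary of the epigraph. -/
def graphSet (m : ℕ) (g : EuclideanSpace ℝ (Fin m) → ℝ) :
    Set (EuclideanSpace ℝ (Fin (m + 1))) :=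
  {x | x (Fin.last m) = g (WithLp.toLp 2 (fun i : Fin m => x i.castSucc))}

noncomputable section HLaux

/-! ### Calculus helpers -/

variable {E : Type*} [NormedAddCommGroup E] [NormedSpace ℝ E] {D : Set E} {f : E → ℝ}

lemma taylor_aux (φ φ' φ'' : ℝ → ℝ) (a b : ℝ)
    (h1 : ∀ t ∈ Set.uIcc a b, HasDerivAt φ (φ' t) t)
    (h2 : ∀ t ∈ Set.uIcc a b, HasDerivAt φ' (φ'' t) t)
    (h2c : ContinuousOn φ'' (Set.uIcc a b)) :
    φ b = φ a + (b - a) * φ' a + ∫ t in a..b, (b - t) * φ'' t := by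
  have hG : ∀ t ∈ Set.uIcc a b,
      HasDerivAt (fun t => φ t + (b - t) * φ' t) ((b - t) * φ'' t) t := by
    intro t ht
    have := (h1 t ht).add ((((hasDerivAt_id t).const_sub b)).mul (h2 t ht))
    exact this.congr_deriv (by simp only [id_eq]; ring)
  have hint : IntervalIntegrable (fun t => (b - t) * φ'' t) MeasureTheory.volume a b :=
    (((continuousOn_const).sub continuousOn_id).mul h2c).intervalIntegrable
  have := intervalIntegral.integral_eq_sub_of_hasDerivAt hG hint
  rw [this]; ring

lemma ftc_aux (φ φ' : ℝ → ℝ) (a b : ℝ)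
    (h1 : ∀ t ∈ Set.uIcc a b, HasDerivAt φ (φ' t) t)
    (h1c : ContinuousOn φ' (Set.uIcc a b)) :
    φ b = φ a + ∫ t in a..b, φ' t := by
  rw [intervalIntegral.integral_eq_sub_of_hasDerivAt h1 h1c.intervalIntegrable]; ring

lemma line_hasDerivAt (hD : IsOpen D) (hf : ContDiffOn ℝ 2 f D) {c v : E} {t : ℝ}
    (hq : c + t • v ∈ D) :
    HasDerivAt (fun s => f (c + s • v)) (fderiv ℝ f (c + t • v) v) t := by
  have hdf : DifferentiableAt ℝ f (c + t • v) :=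
    (hf.differentiableOn (by norm_num)).differentiableAt (hD.mem_nhds hq)
  have hline : HasDerivAt (fun s : ℝ => c + s • v) v t := by
    simpa using ((hasDerivAt_id t).smul_const v).const_add c
  exact hdf.hasFDerivAt.comp_hasDerivAt t hline

lemma line_hasDerivAt' (hD : IsOpen D) (hf : ContDiffOn ℝ 2 f D) {c v w : E} {t : ℝ}
    (hq : c + t • v ∈ D) :
    HasDerivAt (fun s => fderiv ℝ f (c + s • v) w)
      (fderiv ℝ (fderiv ℝ f) (c + t • v) v w) t := by
  have hf1 : ContDiffOn ℝ 1 (fderiv ℝ f) D := hf.fderiv_of_isOpen hD (by norm_num)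
  have hdf1 : DifferentiableAt ℝ (fderiv ℝ f) (c + t • v) :=
    (hf1.differentiableOn (by norm_num)).differentiableAt (hD.mem_nhds hq)
  have hline : HasDerivAt (fun s : ℝ => c + s • v) v t := by
    simpa using ((hasDerivAt_id t).smul_const v).const_add c
  have hc : HasDerivAt (fun s => fderiv ℝ f (c + s • v))
      (fderiv ℝ (fderiv ℝ f) (c + t • v) v) t :=
    hdf1.hasFDerivAt.comp_hasDerivAt t hline
  simpa using hc.clm_apply (hasDerivAt_const t w)

lemma line_cont2 (hD : IsOpen D) (hf : ContDiffOn ℝ 2 f D) (c v w : E) (T : Set ℝ)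
    (hT : ∀ t ∈ T, c + t • v ∈ D) :
    ContinuousOn (fun s => fderiv ℝ (fderiv ℝ f) (c + s • v) v w) T := by
  have hf1 : ContDiffOn ℝ 1 (fderiv ℝ f) D := hf.fderiv_of_isOpen hD (by norm_num)
  have hf2c : ContinuousOn (fderiv ℝ (fderiv ℝ f)) D :=
    hf1.continuousOn_fderiv_of_isOpen hD le_rfl
  have hline : Continuous (fun s : ℝ => c + s • v) := by continuity
  have : ContinuousOn (fun s => fderiv ℝ (fderiv ℝ f) (c + s • v)) T :=
    hf2c.comp hline.continuousOn hT
  exact (this.clm_apply continuousOn_const).clm_apply continuousOn_const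

lemma f2_bound (hD : IsOpen D) {p : E} (hp : p ∈ D) (a b : E) :
    |fderiv ℝ (fderiv ℝ f) p a b| ≤ ‖iteratedFDerivWithin ℝ 2 f D p‖ * ‖a‖ * ‖b‖ := by
  have h2 : iteratedFDeriv ℝ 2 f p ![a, b] = fderiv ℝ (fderiv ℝ f) p a b := by
    rw [iteratedFDeriv_two_apply]; simp
  have := (iteratedFDeriv ℝ 2 f p).le_opNorm ![a, b]
  rw [h2] at this
  rw [iteratedFDerivWithin_of_isOpen 2 hD hp]
  simpa [Fin.prod_univ_two, Real.norm_eq_abs, mul_assoc] using this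

/-! ### Geometry helpers -/

def projE (m : ℕ) (y : EuclideanSpace ℝ (Fin (m + 1))) : EuclideanSpace ℝ (Fin m) :=
  WithLp.toLp 2 (fun i : Fin m => y i.castSucc)

lemma abs_last_le (m : ℕ) (y : EuclideanSpace ℝ (Fin (m + 1))) :
    |y (Fin.last m)| ≤ ‖y‖ := by
  rw [EuclideanSpace.norm_eq]
  calc |y (Fin.last m)| = Real.sqrt (‖y (Fin.last m)‖ ^ 2) := by
        rw [Real.sqrt_sq_eq_abs, Real.norm_eq_abs, abs_abs]
    _ ≤ _ := by
        apply Real.sqrt_le_sqrt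
        exact Finset.single_le_sum (f := fun i => ‖y i‖ ^ 2)
          (fun i _ => sq_nonneg _) (Finset.mem_univ _)

lemma norm_projE_le (m : ℕ) (y : EuclideanSpace ℝ (Fin (m + 1))) :
    ‖projE m y‖ ≤ ‖y‖ := by
  rw [EuclideanSpace.norm_eq, EuclideanSpace.norm_eq]
  apply Real.sqrt_le_sqrt
  rw [Fin.sum_univ_castSucc (f := fun i => ‖y i‖ ^ 2)]
  have : ∑ i : Fin m, ‖projE m y i‖ ^ 2 = ∑ i : Fin m, ‖y i.castSucc‖ ^ 2 := rfl
  rw [this]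
  have := sq_nonneg ‖y (Fin.last m)‖; linarith

lemma projE_smul_single (m : ℕ) (s : ℝ) :
    projE m (s • EuclideanSpace.single (Fin.last m) (1:ℝ)) = 0 := by
  ext i
  show s * (EuclideanSpace.single (Fin.last m) (1:ℝ)) i.castSucc = 0
  rw [EuclideanSpace.single_apply, if_neg (by exact Fin.castSucc_lt_last i |>.ne)]
  ring

lemma last_add_smul_single (m : ℕ) (y : EuclideanSpace ℝ (Fin (m + 1))) (s : ℝ) :
    (y + s • EuclideanSpace.single (Fin.last m) (1:ℝ)) (Fin.last m) = y (Fin.last m) + s := by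
  show y (Fin.last m) + s * (EuclideanSpace.single (Fin.last m) (1:ℝ)) (Fin.last m) = _
  rw [EuclideanSpace.single_apply, if_pos rfl]; ring

/-- the "vertical gap" of a point over the graph -/
def gapF (m : ℕ) (g : EuclideanSpace ℝ (Fin m) → ℝ) (y : EuclideanSpace ℝ (Fin (m + 1))) : ℝ :=
  y (Fin.last m) - g (projE m y)

lemma mem_epigraph_iff (m g y) : y ∈ epigraph m g ↔ 0 < gapF m g y := by
  show g (projE m y) < y (Fin.last m) ↔ _
  exact sub_pos.symm

lemma gapF_lip {m : ℕ} {g : EuclideanSpace ℝ (Fin m) → ℝ} {L : ℝ} (hL : 0 ≤ L)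
    (hg : LipschitzWith (Real.toNNReal L) g) (y z : EuclideanSpace ℝ (Fin (m + 1))) :
    gapF m g y ≤ gapF m g z + (1 + L) * dist y z := by
  have hdist : dist y z = ‖y - z‖ := dist_eq_norm y z
  have h1 : |((y - z) (Fin.last m) : ℝ)| ≤ ‖y - z‖ := abs_last_le m (y - z)
  have h2 : ‖projE m (y - z)‖ ≤ ‖y - z‖ := norm_projE_le m (y - z)
  have hsub : (y - z) (Fin.last m) = y (Fin.last m) - z (Fin.last m) := rfl
  have hproj : projE m y - projE m z = projE m (y - z) := rfl
  have hgly : g (projE m z) - g (projE m y) ≤ L * ‖projE m (y - z)‖ := by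
    have := hg.dist_le_mul (projE m z) (projE m y)
    rw [Real.coe_toNNReal L hL] at this
    calc g (projE m z) - g (projE m y) ≤ dist (g (projE m z)) (g (projE m y)) := by
          rw [Real.dist_eq]; exact le_abs_self _
      _ ≤ L * dist (projE m z) (projE m y) := this
      _ = L * ‖projE m (y - z)‖ := by
          rw [dist_eq_norm, ← hproj, norm_sub_rev]
  have hLn : L * ‖projE m (y-z)‖ ≤ L * ‖y - z‖ := by
    apply mul_le_mul_of_nonneg_left h2 hL
  unfold gapF
  have : y (Fin.last m) - z (Fin.last m) ≤ ‖y - z‖ := by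
    rw [← hsub]; exact (le_abs_self _).trans h1
  rw [hdist]
  nlinarith

lemma graphSet_nonempty (m : ℕ) (g : EuclideanSpace ℝ (Fin m) → ℝ) :
    (graphSet m g).Nonempty := by
  refine ⟨EuclideanSpace.single (Fin.last m) (g 0), ?_⟩
  have hπ : (WithLp.toLp 2 (fun i : Fin m => (EuclideanSpace.single (Fin.last m) (g 0)) i.castSucc) :
      EuclideanSpace ℝ (Fin m)) = (0 : EuclideanSpace ℝ (Fin m)) := by
    ext i
    show (EuclideanSpace.single (Fin.last m) (g 0)) i.castSucc = 0
    rw [EuclideanSpace.single_apply, if_neg (Fin.castSucc_lt_last i).ne]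
  show (EuclideanSpace.single (Fin.last m) (g 0)) (Fin.last m) = _
  rw [EuclideanSpace.single_apply, if_pos rfl, hπ]

lemma gapF_graphSet {m g} {z : EuclideanSpace ℝ (Fin (m+1))} (hz : z ∈ graphSet m g) :
    gapF m g z = 0 := by
  have : z (Fin.last m) = g (WithLp.toLp 2 (fun i : Fin m => z i.castSucc)) := hz
  show z (Fin.last m) - g (projE m z) = 0
  rw [this]
  exact sub_eq_zero.mpr rfl

lemma infDist_ge {m : ℕ} {g : EuclideanSpace ℝ (Fin m) → ℝ} {L : ℝ} (hL : 0 ≤ L)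
    (hg : LipschitzWith (Real.toNNReal L) g) (y : EuclideanSpace ℝ (Fin (m + 1))) :
    gapF m g y / (1 + L) ≤ infDist y (graphSet m g) := by
  by_contra hcon
  rw [not_le] at hcon
  obtain ⟨z, hz, hlt⟩ := (infDist_lt_iff (graphSet_nonempty m g)).1 hcon
  have := gapF_lip hL hg y z
  rw [gapF_graphSet hz] at this
  have h1L : (0:ℝ) < 1 + L := by linarith
  rw [lt_div_iff₀ h1L] at hlt
  linarith

lemma isOpen_epigraph (m : ℕ) (g : EuclideanSpace ℝ (Fin m) → ℝ) {L : ℝ}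
    (hg : LipschitzWith (Real.toNNReal L) g) : IsOpen (epigraph m g) := by
  have hcont : Continuous fun y : EuclideanSpace ℝ (Fin (m+1)) =>
      y (Fin.last m) - g (WithLp.toLp 2 (fun i : Fin m => y i.castSucc)) := by
    apply Continuous.sub
    · exact (continuous_apply (Fin.last m)).comp (PiLp.continuous_ofLp 2 _)
    · have hproj : Continuous (projE m) := by
        have hmid : Continuous fun y : (Fin (m+1) → ℝ) => (fun i : Fin m => y i.castSucc) :=
          continuous_pi fun i => continuous_apply i.castSucc
        exact (PiLp.continuous_toLp 2 fun _ : Fin m => ℝ).comp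
          (hmid.comp (PiLp.continuous_ofLp 2 fun _ : Fin (m+1) => ℝ))
      exact hg.continuous.comp hproj
  have : epigraph m g = (fun y : EuclideanSpace ℝ (Fin (m+1)) =>
      y (Fin.last m) - g (WithLp.toLp 2 (fun i : Fin m => y i.castSucc))) ⁻¹' (Set.Ioi 0) := by
    ext y; simp [epigraph, sub_pos]
  rw [this]
  exact hcont.isOpen_preimage _ isOpen_Ioi

end HLaux

set_option maxHeartbeats 2000000 in
/-- Hardy–Littlewood-type lemma (Lemma 5.1). -/
theorem stmt0 (m : ℕ) (hm : 1 ≤ m) (L β : ℝ) (hL : 1 ≤ L) (hβ0 : 0 ≤ β) (hβ1 : β < 1) :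
    ∃ C : ℝ, ∀ g : EuclideanSpace ℝ (Fin m) → ℝ, LipschitzWith (Real.toNNReal L) g →
      ∀ (A : ℝ), 0 ≤ A →
      ∀ f : EuclideanSpace ℝ (Fin (m + 1)) → ℝ,
        ContDiffOn ℝ 2 f (epigraph m g) →
        (∀ x ∈ epigraph m g,
          ‖iteratedFDerivWithin ℝ 2 f (epigraph m g) x‖ ≤
            A * Metric.infDist x (graphSet m g) ^ (β - 1)) →
        ∀ x h : EuclideanSpace ℝ (Fin (m + 1)),
          x ∈ epigraph m g → x + h ∈ epigraph m g → x - h ∈ epigraph m g →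
          |f (x + h) + f (x - h) - 2 * f x| ≤ C * A * ‖h‖ ^ (1 + β) := by
  have hL0 : (0:ℝ) ≤ L := by linarith
  have h1L : (0:ℝ) < 1 + L := by linarith
  refine ⟨2 + 4*(1+L) + 16*(1+L)^3, ?_⟩
  intro g hg A hA f hf hbound x h hx hpx hmx
  set D := epigraph m g with hDdef
  set Γ := graphSet m g with hΓdef
  have hD : IsOpen D := isOpen_epigraph m g hg
  by_cases hh0 : h = 0
  · subst hh0
    simp only [add_zero, sub_zero, norm_zero]
    rw [Real.zero_rpow (by linarith : 1 + β ≠ 0), mul_zero]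
    simp [show f x + f x - 2 * f x = 0 by ring]
  have hr : 0 < ‖h‖ := norm_pos_iff.mpr hh0
  set r := ‖h‖ with hrdef
  set e : EuclideanSpace ℝ (Fin (m+1)) := EuclideanSpace.single (Fin.last m) (1:ℝ) with hedef
  have he1 : ‖e‖ = 1 := by rw [hedef, EuclideanSpace.norm_single]; norm_num
  set S := 2*(1+L)*r with hSdef
  have hS0 : 0 < S := by positivity
  -- gap basics
  have gap_shift : ∀ (y : EuclideanSpace ℝ (Fin (m+1))) (s : ℝ),
      gapF m g (y + s • e) = gapF m g y + s := by
    intro y s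
    have hp : projE m (y + s • e) = projE m y := by
      have h0 : projE m (y + s • e) = projE m y + projE m (s • e) := rfl
      rw [h0, hedef, projE_smul_single, add_zero]
    show (y + s • e) (Fin.last m) - g (projE m (y + s • e)) = _
    rw [hp, hedef, last_add_smul_single m y s]
    show y (Fin.last m) + s - g (projE m y) = y (Fin.last m) - g (projE m y) + s
    ring
  have gapD : ∀ y, y ∈ D → 0 < gapF m g y := fun y hy => (mem_epigraph_iff m g y).1 hy
  have memD : ∀ y, 0 < gapF m g y → y ∈ D := fun y hy => (mem_epigraph_iff m g y).2 hy
  have hdistlow : ∀ (y : EuclideanSpace ℝ (Fin (m+1))) (d : ℝ),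
      (1+L)*d ≤ gapF m g y → d ≤ infDist y Γ := by
    intro y d hd
    have h2 : d ≤ gapF m g y / (1+L) := by rw [le_div_iff₀ h1L]; linarith
    linarith [infDist_ge hL0 hg y]
  -- the master second-derivative bound
  have hb : ∀ p, p ∈ D → ∀ d : ℝ, 0 < d → (1+L)*d ≤ gapF m g p →
      ∀ a b : EuclideanSpace ℝ (Fin (m+1)),
      |fderiv ℝ (fderiv ℝ f) p a b| ≤ A * d ^ (β - 1) * ‖a‖ * ‖b‖ := by
    intro p hp d hd hgap a b
    have h1 := f2_bound (f := f) hD hp a b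
    have h3 : infDist p Γ ^ (β-1) ≤ d ^ (β-1) :=
      Real.rpow_le_rpow_of_nonpos hd (hdistlow p d hgap) (by linarith)
    have h4 : ‖iteratedFDerivWithin ℝ 2 f D p‖ ≤ A * d ^ (β-1) :=
      (hbound p hp).trans (mul_le_mul_of_nonneg_left h3 hA)
    calc |fderiv ℝ (fderiv ℝ f) p a b| ≤ ‖iteratedFDerivWithin ℝ 2 f D p‖ * ‖a‖ * ‖b‖ := h1
      _ ≤ A * d ^ (β-1) * ‖a‖ * ‖b‖ := by
          apply mul_le_mul_of_nonneg_right _ (norm_nonneg b)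
          exact mul_le_mul_of_nonneg_right h4 (norm_nonneg a)
  -- membership along vertical lines
  have hgb1 : 0 < gapF m g (x + h) := gapD _ hpx
  have hgb2 : 0 < gapF m g (x - h) := gapD _ hmx
  have hgb0 : 0 < gapF m g x := gapD _ hx
  have hmem1 : ∀ t : ℝ, 0 ≤ t → x + h + t • e ∈ D := by
    intro t ht; apply memD; rw [gap_shift]; linarith
  have hmem2 : ∀ t : ℝ, 0 ≤ t → x - h + t • e ∈ D := by
    intro t ht; apply memD; rw [gap_shift]; linarith
  have hmem3 : ∀ t : ℝ, 0 ≤ t → x + t • e ∈ D := by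
    intro t ht; apply memD; rw [gap_shift]; linarith
  -- the point at height S, and the horizontal segment there
  set y := x + S • e with hydef
  have hmemY : ∀ t : ℝ, |t| ≤ 1 → y + t • h ∈ D ∧ (1+L)*r ≤ gapF m g (y + t • h) := by
    intro t ht
    have hyt : y + t • h = (x + t • h) + S • e := by rw [hydef]; abel
    have hgap1 : gapF m g ((x + t • h) + S • e) = gapF m g (x + t • h) + S := gap_shift _ _
    have hlip := gapF_lip hL0 hg x (x + t • h)
    have hdd : dist x (x + t • h) = |t| * r := by
      rw [dist_self_add_right, norm_smul, Real.norm_eq_abs, hrdef]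
    rw [hdd] at hlip
    have habs : (1+L) * (|t| * r) ≤ (1+L) * r := by
      apply mul_le_mul_of_nonneg_left _ h1L.le
      exact mul_le_of_le_one_left hr.le ht |>.trans (le_refl r) |>.trans (le_refl r)
    have hgapY : (1+L)*r ≤ gapF m g (y + t • h) := by
      rw [hyt, hgap1, hSdef]; nlinarith
    exact ⟨memD _ (by nlinarith [hgapY]), hgapY⟩
  -- ### Part 1: vertical Taylor expansion
  set F : ℝ → ℝ := fun s => f (x + h + s • e) + f (x - h + s • e) - 2 * f (x + s • e)
    with hFdef
  set F' : ℝ → ℝ := fun s => fderiv ℝ f (x + h + s • e) e + fderiv ℝ f (x - h + s • e) e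
    - 2 * fderiv ℝ f (x + s • e) e with hF'def
  set F'' : ℝ → ℝ := fun s => fderiv ℝ (fderiv ℝ f) (x + h + s • e) e e
    + fderiv ℝ (fderiv ℝ f) (x - h + s • e) e e
    - 2 * fderiv ℝ (fderiv ℝ f) (x + s • e) e e with hF''def
  have huIcc : Set.uIcc S (0:ℝ) = Set.Icc 0 S := by rw [Set.uIcc_comm, Set.uIcc_of_le hS0.le]
  have hFd : ∀ t ∈ Set.uIcc S (0:ℝ), HasDerivAt F (F' t) t := by
    intro t ht
    rw [huIcc] at ht
    exact ((line_hasDerivAt hD hf (hmem1 t ht.1)).add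
      (line_hasDerivAt hD hf (hmem2 t ht.1))).sub
      ((line_hasDerivAt hD hf (hmem3 t ht.1)).const_mul 2)
  have hF'd : ∀ t ∈ Set.uIcc S (0:ℝ), HasDerivAt F' (F'' t) t := by
    intro t ht
    rw [huIcc] at ht
    exact ((line_hasDerivAt' hD hf (hmem1 t ht.1)).add
      (line_hasDerivAt' hD hf (hmem2 t ht.1))).sub
      ((line_hasDerivAt' hD hf (hmem3 t ht.1)).const_mul 2)
  have hF''c : ContinuousOn F'' (Set.uIcc S (0:ℝ)) := by
    rw [huIcc, hF''def]
    exact ((line_cont2 hD hf (x+h) e e _ (fun t ht => hmem1 t ht.1)).add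
      (line_cont2 hD hf (x-h) e e _ (fun t ht => hmem2 t ht.1))).sub
      (continuousOn_const.mul (line_cont2 hD hf x e e _ (fun t ht => hmem3 t ht.1)))
  have htay := taylor_aux F F' F'' S 0 hFd hF'd hF''c
  have hswap : (∫ t in S..(0:ℝ), (0 - t) * F'' t) = ∫ t in (0:ℝ)..S, t * F'' t := by
    rw [intervalIntegral.integral_symm, ← intervalIntegral.integral_neg]
    congr 1; funext t; ring
  rw [hswap] at htay
  -- ### Part 2: estimates at height S
  -- second difference of f at height S
  have hψ1 : y + (1:ℝ) • h = x + h + S • e := by rw [one_smul, hydef]; abel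
  have hψ2 : y + (-1:ℝ) • h = x - h + S • e := by rw [neg_one_smul, hydef]; abel
  have hψ0 : y + (0:ℝ) • h = x + S • e := by rw [zero_smul, add_zero, hydef]
  set ψ : ℝ → ℝ := fun t => f (y + t • h) with hψdef
  set ψ' : ℝ → ℝ := fun t => fderiv ℝ f (y + t • h) h with hψ'def
  set ψ'' : ℝ → ℝ := fun t => fderiv ℝ (fderiv ℝ f) (y + t • h) h h with hψ''def
  have hsub1 : ∀ t ∈ Set.uIcc (0:ℝ) 1, |t| ≤ 1 := by
    intro t ht
    rw [Set.uIcc_of_le zero_le_one] at ht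
    rw [abs_le]; exact ⟨by linarith [ht.1], ht.2⟩
  have hsub2 : ∀ t ∈ Set.uIcc (0:ℝ) (-1), |t| ≤ 1 := by
    intro t ht
    rw [Set.uIcc_comm, Set.uIcc_of_le (by norm_num : (-1:ℝ) ≤ 0)] at ht
    rw [abs_le]; exact ⟨ht.1, by linarith [ht.2]⟩
  have hψd : ∀ t : ℝ, |t| ≤ 1 → HasDerivAt ψ (ψ' t) t :=
    fun t ht => line_hasDerivAt hD hf (hmemY t ht).1
  have hψ'd : ∀ t : ℝ, |t| ≤ 1 → HasDerivAt ψ' (ψ'' t) t :=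
    fun t ht => line_hasDerivAt' hD hf (hmemY t ht).1
  have hψ''c : ContinuousOn ψ'' {t : ℝ | |t| ≤ 1} := by
    rw [hψ''def]
    exact line_cont2 hD hf y h h _ (fun t ht => (hmemY t ht).1)
  have htay1 := taylor_aux ψ ψ' ψ'' 0 1 (fun t ht => hψd t (hsub1 t ht))
    (fun t ht => hψ'd t (hsub1 t ht)) (hψ''c.mono hsub1)
  have htay2 := taylor_aux ψ ψ' ψ'' 0 (-1) (fun t ht => hψd t (hsub2 t ht))
    (fun t ht => hψ'd t (hsub2 t ht)) (hψ''c.mono hsub2)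
  -- pointwise bound on ψ''
  have hψ''b : ∀ t : ℝ, |t| ≤ 1 → |ψ'' t| ≤ A * r ^ (β-1) * r * r := by
    intro t ht
    obtain ⟨hmem, hgap⟩ := hmemY t ht
    simpa [hrdef] using hb _ hmem r hr hgap h h
  have hMnn : 0 ≤ A * r ^ (β-1) * r * r := by positivity
  have hI1 : |∫ t in (0:ℝ)..1, (1 - t) * ψ'' t| ≤ A * r ^ (β-1) * r * r := by
    have hbnd : ∀ t ∈ Set.uIoc (0:ℝ) 1, ‖(1 - t) * ψ'' t‖ ≤ A * r ^ (β-1) * r * r := by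
      intro t ht
      rw [Set.uIoc_of_le zero_le_one] at ht
      rw [Real.norm_eq_abs, abs_mul]
      calc |1 - t| * |ψ'' t| ≤ 1 * (A * r ^ (β-1) * r * r) := by
            apply mul_le_mul _ (hψ''b t (by rw [abs_le]; exact ⟨by linarith [ht.1], ht.2⟩))
              (abs_nonneg _) zero_le_one
            rw [abs_le]; constructor <;> [linarith [ht.2]; linarith [ht.1]]
        _ = A * r ^ (β-1) * r * r := one_mul _
    have := intervalIntegral.norm_integral_le_of_norm_le_const hbnd
    simpa [Real.norm_eq_abs] using this
  have hI2 : |∫ t in (0:ℝ)..(-1), (-1 - t) * ψ'' t| ≤ A * r ^ (β-1) * r * r := by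
    have hbnd : ∀ t ∈ Set.uIoc (0:ℝ) (-1), ‖(-1 - t) * ψ'' t‖ ≤ A * r ^ (β-1) * r * r := by
      intro t ht
      rw [Set.uIoc_comm, Set.uIoc_of_le (by norm_num : (-1:ℝ) ≤ 0)] at ht
      rw [Real.norm_eq_abs, abs_mul]
      calc |(-1) - t| * |ψ'' t| ≤ 1 * (A * r ^ (β-1) * r * r) := by
            apply mul_le_mul _ (hψ''b t (by rw [abs_le]; exact ⟨ht.1.le, by linarith [ht.2]⟩))
              (abs_nonneg _) zero_le_one
            rw [abs_le]; constructor <;> [linarith [ht.2]; linarith [ht.1]]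
        _ = A * r ^ (β-1) * r * r := one_mul _
    have := intervalIntegral.norm_integral_le_of_norm_le_const hbnd
    simpa [Real.norm_eq_abs] using this
  have hFS : |F S| ≤ 2 * (A * r ^ (β-1) * r * r) := by
    have hFSeq : F S = ψ 1 + ψ (-1) - 2 * ψ 0 := by
      simp only [hFdef, hψdef, hψ1, hψ2, hψ0]
    rw [hFSeq, htay1, htay2]
    have := abs_add_le (∫ t in (0:ℝ)..1, (1 - t) * ψ'' t) (∫ t in (0:ℝ)..(-1), (-1 - t) * ψ'' t)
    calc |ψ 0 + (1-0) * ψ' 0 + (∫ t in (0:ℝ)..1, (1-t) * ψ'' t)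
          + (ψ 0 + (-1-0) * ψ' 0 + ∫ t in (0:ℝ)..(-1), (-1-t) * ψ'' t) - 2 * ψ 0|
        = |(∫ t in (0:ℝ)..1, (1-t) * ψ'' t) + ∫ t in (0:ℝ)..(-1), (-1-t) * ψ'' t| := by
          congr 1; ring
      _ ≤ _ := this
      _ ≤ 2 * (A * r ^ (β-1) * r * r) := by linarith
  -- first-derivative differences at height S
  set v : ℝ → ℝ := fun t => fderiv ℝ f (y + t • h) e with hvdef
  set v' : ℝ → ℝ := fun t => fderiv ℝ (fderiv ℝ f) (y + t • h) h e with hv'def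
  have hvd : ∀ t : ℝ, |t| ≤ 1 → HasDerivAt v (v' t) t :=
    fun t ht => line_hasDerivAt' hD hf (hmemY t ht).1
  have hv'c : ContinuousOn v' {t : ℝ | |t| ≤ 1} := by
    rw [hv'def]
    exact line_cont2 hD hf y h e _ (fun t ht => (hmemY t ht).1)
  have hv'b : ∀ t : ℝ, |t| ≤ 1 → |v' t| ≤ A * r ^ (β-1) * r := by
    intro t ht
    obtain ⟨hmem, hgap⟩ := hmemY t ht
    have := hb _ hmem r hr hgap h e
    rw [he1, mul_one] at this
    simpa [hrdef] using this
  have hftc1 := ftc_aux v v' 0 1 (fun t ht => hvd t (hsub1 t ht)) (hv'c.mono hsub1)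
  have hftc2 := ftc_aux v v' 0 (-1) (fun t ht => hvd t (hsub2 t ht)) (hv'c.mono hsub2)
  have hJ1 : |∫ t in (0:ℝ)..1, v' t| ≤ A * r ^ (β-1) * r := by
    have hbnd : ∀ t ∈ Set.uIoc (0:ℝ) 1, ‖v' t‖ ≤ A * r ^ (β-1) * r := by
      intro t ht
      rw [Set.uIoc_of_le zero_le_one] at ht
      rw [Real.norm_eq_abs]
      exact hv'b t (by rw [abs_le]; exact ⟨by linarith [ht.1], ht.2⟩)
    have := intervalIntegral.norm_integral_le_of_norm_le_const hbnd
    simpa [Real.norm_eq_abs] using this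
  have hJ2 : |∫ t in (0:ℝ)..(-1), v' t| ≤ A * r ^ (β-1) * r := by
    have hbnd : ∀ t ∈ Set.uIoc (0:ℝ) (-1), ‖v' t‖ ≤ A * r ^ (β-1) * r := by
      intro t ht
      rw [Set.uIoc_comm, Set.uIoc_of_le (by norm_num : (-1:ℝ) ≤ 0)] at ht
      rw [Real.norm_eq_abs]
      exact hv'b t (by rw [abs_le]; exact ⟨ht.1.le, by linarith [ht.2]⟩)
    have := intervalIntegral.norm_integral_le_of_norm_le_const hbnd
    simpa [Real.norm_eq_abs] using this
  have hF'S : |F' S| ≤ 2 * (A * r ^ (β-1) * r) := by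
    have hF'Seq : F' S = v 1 + v (-1) - 2 * v 0 := by
      simp only [hF'def, hvdef, hψ1, hψ2, hψ0]
    rw [hF'Seq, hftc1, hftc2]
    have := abs_add_le (∫ t in (0:ℝ)..1, v' t) (∫ t in (0:ℝ)..(-1), v' t)
    calc |v 0 + (∫ t in (0:ℝ)..1, v' t) + (v 0 + ∫ t in (0:ℝ)..(-1), v' t) - 2 * v 0|
        = |(∫ t in (0:ℝ)..1, v' t) + ∫ t in (0:ℝ)..(-1), v' t| := by congr 1; ring
      _ ≤ _ := this
      _ ≤ 2 * (A * r ^ (β-1) * r) := by linarith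
  -- ### Part 3: the weighted integral of F''
  have hKnn : (0:ℝ) ≤ 4 * A * (1+L) ^ (1-β) := by positivity
  have hptw : ∀ t ∈ Set.Icc (0:ℝ) S, |t * F'' t| ≤ 4 * A * (1+L) ^ (1-β) * t ^ β := by
    intro t ht
    rcases eq_or_lt_of_le ht.1 with h0 | h0
    · rw [← h0]
      simp only [zero_mul, abs_zero]
      positivity
    · set d := t / (1+L) with hddef
      have hd : 0 < d := div_pos h0 h1L
      have hdt : (1+L) * d = t := by rw [hddef]; field_simp
      have hgap1 : (1+L)*d ≤ gapF m g (x + h + t • e) := by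
        rw [gap_shift, hdt]; linarith
      have hgap2 : (1+L)*d ≤ gapF m g (x - h + t • e) := by
        rw [gap_shift, hdt]; linarith
      have hgap3 : (1+L)*d ≤ gapF m g (x + t • e) := by
        rw [gap_shift, hdt]; linarith
      have e1 := hb _ (hmem1 t h0.le) d hd hgap1 e e
      have e2 := hb _ (hmem2 t h0.le) d hd hgap2 e e
      have e3 := hb _ (hmem3 t h0.le) d hd hgap3 e e
      rw [he1, mul_one, mul_one] at e1 e2 e3
      have hF''t : |F'' t| ≤ 4 * (A * d ^ (β-1)) := by
        rw [hF''def]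
        calc |fderiv ℝ (fderiv ℝ f) (x + h + t • e) e e
              + fderiv ℝ (fderiv ℝ f) (x - h + t • e) e e
              - 2 * fderiv ℝ (fderiv ℝ f) (x + t • e) e e|
            ≤ |fderiv ℝ (fderiv ℝ f) (x + h + t • e) e e
              + fderiv ℝ (fderiv ℝ f) (x - h + t • e) e e|
              + |2 * fderiv ℝ (fderiv ℝ f) (x + t • e) e e| := abs_sub _ _
          _ ≤ _ := by
              rw [abs_mul, abs_two]
              have := abs_add_le (fderiv ℝ (fderiv ℝ f) (x + h + t • e) e e)
                (fderiv ℝ (fderiv ℝ f) (x - h + t • e) e e)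
              linarith
      have hdpow : d ^ (β-1) = t ^ (β-1) * (1+L) ^ (1-β) := by
        rw [hddef, Real.div_rpow h0.le h1L.le,
          show (1-β) = -(β-1) by ring, Real.rpow_neg h1L.le, div_eq_mul_inv]
      have htpow : t * t ^ (β-1) = t ^ β := by
        rw [mul_comm, ← Real.rpow_add_one h0.ne' (β-1)]
        norm_num
      calc |t * F'' t| = t * |F'' t| := by
            rw [abs_mul, abs_of_nonneg h0.le]
        _ ≤ t * (4 * (A * d ^ (β-1))) := mul_le_mul_of_nonneg_left hF''t h0.le
        _ = 4 * A * (1+L) ^ (1-β) * (t * t ^ (β-1)) := by rw [hdpow]; ring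
        _ = 4 * A * (1+L) ^ (1-β) * t ^ β := by rw [htpow]
  have hrpowc : Continuous (fun t : ℝ => 4 * A * (1+L) ^ (1-β) * t ^ β) := by
    apply continuous_const.mul
    exact continuous_iff_continuousAt.mpr fun t => Real.continuousAt_rpow_const t β (Or.inr hβ0)
  have hIcont : ContinuousOn (fun t : ℝ => t * F'' t) (Set.uIcc (0:ℝ) S) := by
    rw [Set.uIcc_of_le hS0.le, ← huIcc] at *
    exact continuousOn_id.mul hF''c
  have hT3 : |∫ t in (0:ℝ)..S, t * F'' t| ≤ 4 * A * (1+L) ^ (1-β) * (S ^ (β+1) / (β+1)) := by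
    calc |∫ t in (0:ℝ)..S, t * F'' t| ≤ ∫ t in (0:ℝ)..S, |t * F'' t| :=
          intervalIntegral.abs_integral_le_integral_abs hS0.le
      _ ≤ ∫ t in (0:ℝ)..S, 4 * A * (1+L) ^ (1-β) * t ^ β := by
          apply intervalIntegral.integral_mono_on hS0.le
            (hIcont.abs.intervalIntegrable)
            ((hrpowc.continuousOn).intervalIntegrable)
          intro t ht
          exact hptw t ht
      _ = 4 * A * (1+L) ^ (1-β) * ∫ t in (0:ℝ)..S, t ^ β := by
          rw [intervalIntegral.integral_const_mul]
      _ = 4 * A * (1+L) ^ (1-β) * (S ^ (β+1) / (β+1)) := by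
          rw [integral_rpow (Or.inl (by linarith : (-1:ℝ) < β)),
            Real.zero_rpow (by linarith : β + 1 ≠ 0)]
          ring
  -- ### assemble
  have hF0 : F 0 = f (x + h) + f (x - h) - 2 * f x := by
    simp only [hFdef, zero_smul, add_zero]
  have hrr : r ^ (β-1) * r * r = r ^ (1+β) := by
    have h1 : r ^ (β-1) * r = r ^ (β-1+1) := (Real.rpow_add_one hr.ne' (β-1)).symm
    have h2 : r ^ (β-1+1) * r = r ^ (β-1+1+1) := (Real.rpow_add_one hr.ne' (β-1+1)).symm
    rw [h1, h2, show β-1+1+1 = 1+β by ring]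
  have hSpow : S ^ (β+1) ≤ (2*(1+L))^2 * r ^ (1+β) := by
    have hS' : S ^ (β+1) = (2*(1+L)) ^ (β+1) * r ^ (1+β) := by
      rw [hSdef, Real.mul_rpow (by positivity) hr.le,
        show r ^ (β+1) = r ^ (1+β) by rw [add_comm]]
    have h73 : (2*(1+L)) ^ (β+1) ≤ (2*(1+L)) ^ (2:ℕ) := by
      calc (2*(1+L)) ^ (β+1) ≤ (2*(1+L)) ^ ((2:ℕ):ℝ) :=
            Real.rpow_le_rpow_of_exponent_le (by linarith) (by push_cast; linarith)
        _ = (2*(1+L)) ^ (2:ℕ) := Real.rpow_natCast _ 2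
    rw [hS']
    have : (0:ℝ) ≤ r ^ (1+β) := Real.rpow_nonneg hr.le _
    calc (2*(1+L)) ^ (β+1) * r ^ (1+β) ≤ ((2*(1+L)) ^ (2:ℕ)) * r ^ (1+β) :=
          mul_le_mul_of_nonneg_right h73 this
      _ = (2*(1+L))^2 * r ^ (1+β) := by norm_num
  have h1Lpow : (1+L) ^ (1-β) ≤ 1+L := by
    calc (1+L) ^ (1-β) ≤ (1+L) ^ (1:ℝ) :=
          Real.rpow_le_rpow_of_exponent_le (by linarith) (by linarith)
      _ = 1+L := Real.rpow_one _
  -- final numeric assembly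
  have hT3' : |∫ t in (0:ℝ)..S, t * F'' t| ≤ 16 * (1+L)^3 * (A * r ^ (1+β)) := by
    have hdiv : S ^ (β+1) / (β+1) ≤ S ^ (β+1) :=
      div_le_self (Real.rpow_nonneg hS0.le _) (by linarith)
    have step1 : 4 * A * (1+L) ^ (1-β) * (S ^ (β+1) / (β+1))
        ≤ 4 * A * (1+L) * ((2*(1+L))^2 * r ^ (1+β)) := by
      have hA1 : 4 * A * (1+L) ^ (1-β) ≤ 4 * A * (1+L) := by
        apply mul_le_mul_of_nonneg_left h1Lpow (by positivity)
      have hS1 : S ^ (β+1) / (β+1) ≤ (2*(1+L))^2 * r ^ (1+β) := hdiv.trans hSpow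
      apply mul_le_mul hA1 hS1 (by positivity) (by positivity)
    calc |∫ t in (0:ℝ)..S, t * F'' t| ≤ _ := hT3
      _ ≤ 4 * A * (1+L) * ((2*(1+L))^2 * r ^ (1+β)) := step1
      _ = 16 * (1+L)^3 * (A * r ^ (1+β)) := by ring
  have hrr' : A * r ^ (β-1) * r * r = A * r ^ (1+β) := by
    rw [mul_assoc, mul_assoc, ← mul_assoc (r ^ (β-1)), hrr]
  have hmain : |F 0| ≤ (2 + 4*(1+L) + 16*(1+L)^3) * (A * r ^ (1+β)) := by
    rw [htay]
    have hST2 : S * |F' S| ≤ 4*(1+L) * (A * r ^ (1+β)) := by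
      calc S * |F' S| ≤ S * (2 * (A * r ^ (β-1) * r)) := by
            apply mul_le_mul_of_nonneg_left hF'S hS0.le
        _ = 4*(1+L) * (A * r ^ (β-1) * r * r) := by rw [hSdef]; ring
        _ = 4*(1+L) * (A * r ^ (1+β)) := by rw [hrr']
    have hFS' : |F S| ≤ 2 * (A * r ^ (1+β)) := by rw [← hrr']; exact hFS
    calc |F S + (0 - S) * F' S + ∫ t in (0:ℝ)..S, t * F'' t|
        ≤ |F S + (0 - S) * F' S| + |∫ t in (0:ℝ)..S, t * F'' t| := abs_add_le _ _
      _ ≤ |F S| + |(0 - S) * F' S| + |∫ t in (0:ℝ)..S, t * F'' t| := by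
          linarith [abs_add_le (F S) ((0 - S) * F' S)]
      _ ≤ |F S| + S * |F' S| + |∫ t in (0:ℝ)..S, t * F'' t| := by
          rw [abs_mul, show |(0:ℝ) - S| = S by rw [zero_sub, abs_neg, abs_of_nonneg hS0.le]]
      _ ≤ 2 * (A * r ^ (1+β)) + 4*(1+L) * (A * r ^ (1+β)) + 16*(1+L)^3 * (A * r ^ (1+β)) := by
          linarith
      _ = (2 + 4*(1+L) + 16*(1+L)^3) * (A * r ^ (1+β)) := by ring
  rw [← hF0]
  calc |F 0| ≤ (2 + 4*(1+L) + 16*(1+L)^3) * (A * r ^ (1+β)) := hmain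
    _ = (2 + 4*(1+L) + 16*(1+L)^3) * A * r ^ (1+β) := by ring
end

section
/- Equivalence of Hölder–Zygmund seminorms (Proposition 5.2): Let n ≥ 2, L ≥ 1 and r > 0. Let g : ℝ^{n−1} → ℝ be an L-Lipschitz function and let D = {x ∈ ℝⁿ : x_n > g(x₁,…,x_{n−1})} be its open epigraph. Let f : D → ℝ have continuous partial derivatives ∂^α f on D for all multi-indices α with |α| < r. Define M(f) = sup_{x∈D} |f(x)| + sup { |∂^α f(x+2h) + ∂^α f(x) − 2 ∂^α f(x+h)| / |h|^{r−|α|} : |α| < r, h ∈ ℝⁿ \ {0}, and the segment [x, x+2h] is contained in D }, and assume M(f) < ∞. Then there is a constant C, depending only on n, L and r, such that for every multi-index α with |α| < r, every x ∈ D and every h ≠ 0 with x+h, x−h ∈ D, one has |∂^α f(x)| + |∂^α f(x+h) + ∂^α f(x−h) − 2 ∂^α f(x)| / |h|^{r−|α|} ≤ C · M(f). -/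
open Metric

/-- The partial derivative within `D` in the `i`-th coordinate direction. -/
noncomputable def pderivOn (m : ℕ) (D : Set (EuclideanSpace ℝ (Fin (m + 1)))) (i : Fin (m + 1))
    (f : EuclideanSpace ℝ (Fin (m + 1)) → ℝ) : EuclideanSpace ℝ (Fin (m + 1)) → ℝ :=
  fun x => fderivWithin ℝ f D x (EuclideanSpace.single i 1)

/-- The iterated partial derivative `∂^α f` within `D`, for a multi-index `α`. -/
noncomputable def mderivOn (m : ℕ) (D : Set (EuclideanSpace ℝ (Fin (m + 1))))
    (α : Fin (m + 1) → ℕ) (f : EuclideanSpace ℝ (Fin (m + 1)) → ℝ) :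
    EuclideanSpace ℝ (Fin (m + 1)) → ℝ :=
  ((List.ofFn fun i : Fin (m + 1) => (pderivOn m D i)^[α i]).foldr (· ∘ ·) id) f

namespace HZaux

variable {m : ℕ}

def proj (m : ℕ) (w : EuclideanSpace ℝ (Fin (m + 1))) : EuclideanSpace ℝ (Fin m) :=
  WithLp.toLp 2 (fun i : Fin m => w i.castSucc)

lemma proj_add (w z : EuclideanSpace ℝ (Fin (m+1))) : proj m (w + z) = proj m w + proj m z := by
  ext i; simp [proj]

lemma proj_smul (c : ℝ) (w : EuclideanSpace ℝ (Fin (m+1))) : proj m (c • w) = c • proj m w := by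
  ext i; simp [proj]

lemma proj_single_last (c : ℝ) : proj m (EuclideanSpace.single (Fin.last m) c) = 0 := by
  ext i
  simp only [proj, PiLp.toLp_apply, EuclideanSpace.single_apply]
  rw [if_neg (Fin.castSucc_lt_last i).ne]
  rfl

lemma abs_last_le_norm (w : EuclideanSpace ℝ (Fin (m+1))) : |w (Fin.last m)| ≤ ‖w‖ := by
  rw [EuclideanSpace.norm_eq]
  rw [← Real.sqrt_sq_eq_abs]
  apply Real.sqrt_le_sqrt
  have := Finset.single_le_sum (f := fun i => ‖w i‖ ^ 2) (fun i _ => by positivity)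
    (Finset.mem_univ (Fin.last m))
  simpa [Real.norm_eq_abs, sq_abs] using this

lemma norm_proj_le (w : EuclideanSpace ℝ (Fin (m+1))) : ‖proj m w‖ ≤ ‖w‖ := by
  rw [EuclideanSpace.norm_eq, EuclideanSpace.norm_eq]
  apply Real.sqrt_le_sqrt
  rw [Fin.sum_univ_castSucc (f := fun i => ‖w i‖ ^ 2)]
  have : (0:ℝ) ≤ ‖w (Fin.last m)‖ ^ 2 := by positivity
  have h2 : ∑ i : Fin m, ‖proj m w i‖ ^ 2 = ∑ i : Fin m, ‖w i.castSucc‖ ^ 2 :=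
    Finset.sum_congr rfl fun i _ => rfl
  linarith

lemma mem_epigraph_iff {g : EuclideanSpace ℝ (Fin m) → ℝ} {x : EuclideanSpace ℝ (Fin (m+1))} :
    x ∈ epigraph m g ↔ g (proj m x) < x (Fin.last m) := Iff.rfl

lemma cone_mem {L : ℝ} {g : EuclideanSpace ℝ (Fin m) → ℝ} (hL : 1 ≤ L)
    (hg : LipschitzWith (Real.toNNReal L) g)
    {z w : EuclideanSpace ℝ (Fin (m+1))} (hz : z ∈ epigraph m g)
    (hw : L * ‖proj m w‖ ≤ w (Fin.last m)) : z + w ∈ epigraph m g := by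
  rw [mem_epigraph_iff] at hz ⊢
  rw [proj_add]
  have hlip : g (proj m z + proj m w) ≤ g (proj m z) + L * ‖proj m w‖ := by
    have := hg.dist_le_mul (proj m z + proj m w) (proj m z)
    rw [Real.coe_toNNReal L (by linarith)] at this
    have h1 : dist (g (proj m z + proj m w)) (g (proj m z)) ≤ L * ‖proj m w‖ := by
      simpa [dist_eq_norm] using this
    have := abs_sub_le_iff.mp (by rwa [Real.dist_eq] at h1)
    linarith [this.1]
  have hadd : (z + w) (Fin.last m) = z (Fin.last m) + w (Fin.last m) := rfl
  rw [hadd]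
  linarith

lemma pow_rpow_swap (x : ℝ) (hx : 0 ≤ x) (n : ℕ) (σ : ℝ) : (x^n)^σ = (x^σ)^n := by
  rw [← Real.rpow_natCast x n, ← Real.rpow_mul hx, mul_comm, Real.rpow_mul hx,
    Real.rpow_natCast]

lemma dyadic_slope_bound (φ : ℝ → ℝ) (l c σ : ℝ) (hc : 0 ≤ c) (hσ : 1 < σ)
    (hZ : ∀ s : ℝ, 0 < s → s ≤ 1/2 → |φ (2*s) + φ 0 - 2 * φ s| ≤ c * s ^ σ)
    (hlim : Filter.Tendsto (fun k : ℕ => ((1/2:ℝ)^k)⁻¹ * (φ ((1/2)^k) - φ 0))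
      Filter.atTop (nhds l)) :
    |l - (φ 1 - φ 0)| ≤ (1 - (1/2:ℝ) ^ (σ - 1))⁻¹ * c := by
  set ρ : ℝ := (1/2:ℝ) ^ (σ - 1) with hρdef
  have hρpos : 0 < ρ := Real.rpow_pos_of_pos (by norm_num) _
  have hρlt : ρ < 1 := Real.rpow_lt_one (by norm_num) (by norm_num) (by linarith)
  set a : ℕ → ℝ := fun k => ((1/2:ℝ)^k)⁻¹ * (φ ((1/2)^k) - φ 0) with ha
  have hq : (0:ℝ) < (1/2:ℝ)^σ := Real.rpow_pos_of_pos (by norm_num) _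
  have hq1 : ((1/2:ℝ))^σ ≤ 1 := Real.rpow_le_one (by norm_num) (by norm_num) (by linarith)
  have hstep : ∀ k : ℕ, |a k - a (k+1)| ≤ c * ρ^k := by
    intro k
    set s : ℝ := (1/2:ℝ)^(k+1) with hs
    have hspos : 0 < s := by positivity
    have hs2 : (2:ℝ) * s = (1/2:ℝ)^k := by
      rw [hs, pow_succ]; ring
    have hak : a k = (2*s)⁻¹ * (φ (2*s) - φ 0) := by rw [ha]; simp only [← hs2]
    have hak1 : a (k+1) = s⁻¹ * (φ s - φ 0) := by rw [ha]
    have hkey : a k - a (k+1) = (φ (2*s) + φ 0 - 2 * φ s) / (2*s) := by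
      rw [hak, hak1]
      field_simp
      ring
    have hZs := hZ s hspos (by
      rw [hs]
      calc (1/2:ℝ)^(k+1) ≤ (1/2:ℝ)^1 := by
            apply pow_le_pow_of_le_one (by norm_num) (by norm_num) (by omega)
          _ = 1/2 := pow_one _)
    have h2s : (0:ℝ) < 2*s := by linarith
    rw [hkey, abs_div, abs_of_pos h2s, div_le_iff₀ h2s]
    have hρq : ρ = 2 * (1/2:ℝ)^σ := by
      rw [hρdef, Real.rpow_sub (by norm_num : (0:ℝ) < 1/2), Real.rpow_one]
      ring
    have hmain : ((1/2:ℝ)^σ)^(k+1) ≤ ρ^k * (2*s) := by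
      rw [hs2, hρq, mul_pow, pow_succ, mul_comm (((1/2:ℝ)^σ)^k) ((1/2:ℝ)^σ)]
      have h1 : (2:ℝ)^k * (1/2:ℝ)^k = 1 := by
        rw [← mul_pow]; norm_num
      calc (1/2:ℝ)^σ * ((1/2:ℝ)^σ)^k ≤ 1 * ((1/2:ℝ)^σ)^k := by
            apply mul_le_mul_of_nonneg_right hq1 (by positivity)
        _ = (2:ℝ)^k * ((1/2:ℝ)^σ)^k * (1/2:ℝ)^k := by
            rw [one_mul, mul_assoc, mul_comm (((1/2:ℝ)^σ)^k) ((1/2:ℝ)^k), ← mul_assoc, h1,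
              one_mul]
    calc |φ (2*s) + φ 0 - 2 * φ s| ≤ c * s ^ σ := hZs
      _ = c * ((1/2:ℝ)^σ)^(k+1) := by rw [hs, pow_rpow_swap _ (by norm_num)]
      _ ≤ c * (ρ^k * (2*s)) := mul_le_mul_of_nonneg_left hmain hc
      _ = c * ρ^k * (2*s) := by ring
  -- telescoping
  have htel : ∀ k : ℕ, |a 0 - a k| ≤ c * (1-ρ)⁻¹ * (1 - ρ^k) := by
    intro k
    induction k with
    | zero => simp
    | succ k ihk =>
      have h1 : |a 0 - a (k+1)| ≤ |a 0 - a k| + |a k - a (k+1)| := by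
        have := abs_sub_le (a 0) (a k) (a (k+1))
        simpa using this
      have h2 := hstep k
      have h3 : c * (1-ρ)⁻¹ * (1 - ρ^k) + c * ρ^k = c * (1-ρ)⁻¹ * (1 - ρ^(k+1)) := by
        have h1ρ : (1:ℝ) - ρ ≠ 0 := by linarith
        field_simp
        ring
      linarith
  have hbound : ∀ k : ℕ, |a 0 - a k| ≤ c * (1-ρ)⁻¹ := by
    intro k
    have := htel k
    have hρk : (0:ℝ) ≤ ρ^k := by positivity
    have h1ρ : (0:ℝ) < (1-ρ)⁻¹ := by
      apply inv_pos.mpr; linarith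
    nlinarith [mul_nonneg (mul_nonneg hc h1ρ.le) hρk]
  have hlima : Filter.Tendsto (fun k => |a 0 - a k|) Filter.atTop (nhds (|a 0 - l|)) := by
    exact ((tendsto_const_nhds.sub hlim).abs)
  have hfinal : |a 0 - l| ≤ c * (1-ρ)⁻¹ :=
    le_of_tendsto hlima (Filter.Eventually.of_forall hbound)
  have ha0 : a 0 = φ 1 - φ 0 := by rw [ha]; simp
  rw [ha0] at hfinal
  calc |l - (φ 1 - φ 0)| = |(φ 1 - φ 0) - l| := abs_sub_comm _ _
    _ ≤ c * (1-ρ)⁻¹ := hfinal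
    _ = (1-ρ)⁻¹ * c := by ring


variable {L : ℝ} {g : EuclideanSpace ℝ (Fin m) → ℝ}

lemma ray_mem (hL : 1 ≤ L) (hg : LipschitzWith (Real.toNNReal L) g)
    {y d : EuclideanSpace ℝ (Fin (m+1))} (hy : y ∈ epigraph m g)
    (hcone : L * ‖proj m d‖ ≤ d (Fin.last m)) {t : ℝ} (ht : 0 ≤ t) :
    y + t • d ∈ epigraph m g := by
  apply cone_mem hL hg hy
  rw [proj_smul, norm_smul, Real.norm_eq_abs, abs_of_nonneg ht]
  have h1 : (t • d) (Fin.last m) = t * d (Fin.last m) := rfl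
  rw [h1]
  calc L * (t * ‖proj m d‖) = t * (L * ‖proj m d‖) := by ring
    _ ≤ t * d (Fin.last m) := mul_le_mul_of_nonneg_left hcone ht

lemma ray_bound (hL : 1 ≤ L) (hg : LipschitzWith (Real.toNNReal L) g)
    (F : EuclideanSpace ℝ (Fin (m+1)) → ℝ) (M₁ σ : ℝ) (hM₁ : 0 ≤ M₁) (hσ : 1 < σ)
    (hZ : ∀ x h : EuclideanSpace ℝ (Fin (m + 1)), h ≠ 0 →
      segment ℝ x (x + 2 • h) ⊆ epigraph m g →
      |F (x + 2 • h) + F x - 2 * F (x + h)| ≤ M₁ * ‖h‖ ^ σ)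
    {y d : EuclideanSpace ℝ (Fin (m+1))} (hy : y ∈ epigraph m g) (hd0 : d ≠ 0)
    (hcone : L * ‖proj m d‖ ≤ d (Fin.last m)) :
    |fderivWithin ℝ F (epigraph m g) y d| ≤
      |F (y + d) - F y| + (1 - (1/2:ℝ) ^ (σ - 1))⁻¹ * (M₁ * ‖d‖ ^ σ) := by
  have hρpos : (0:ℝ) < (1/2:ℝ) ^ (σ - 1) := Real.rpow_pos_of_pos (by norm_num) _
  have hρlt : (1/2:ℝ) ^ (σ - 1) < 1 :=
    Real.rpow_lt_one (by norm_num) (by norm_num) (by linarith)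
  have hCρ : (0:ℝ) ≤ (1 - (1/2:ℝ) ^ (σ - 1))⁻¹ := by
    apply inv_nonneg.mpr; linarith
  have hrhs2 : (0:ℝ) ≤ (1 - (1/2:ℝ) ^ (σ - 1))⁻¹ * (M₁ * ‖d‖ ^ σ) := by
    apply mul_nonneg hCρ
    apply mul_nonneg hM₁
    exact Real.rpow_nonneg (norm_nonneg d) σ
  by_cases hdiff : DifferentiableWithinAt ℝ F (epigraph m g) y
  · set φ : ℝ → ℝ := fun t => F (y + t • d) with hφdef
    set l : ℝ := fderivWithin ℝ F (epigraph m g) y d with hl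
    -- the curve
    have hc : HasDerivWithinAt (fun t : ℝ => y + t • d) d (Set.Ici 0) 0 := by
      have h1 : HasDerivAt (fun t : ℝ => t • d) ((1:ℝ) • d) 0 := (hasDerivAt_id 0).smul_const d
      have h2 := h1.const_add y
      rw [one_smul] at h2
      exact h2.hasDerivWithinAt
    have hmaps : Set.MapsTo (fun t : ℝ => y + t • d) (Set.Ici 0) (epigraph m g) :=
      fun t ht => ray_mem hL hg hy hcone ht
    have hF' : HasFDerivWithinAt F (fderivWithin ℝ F (epigraph m g) y) (epigraph m g)
        ((fun t : ℝ => y + t • d) 0) := by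
      simpa using hdiff.hasFDerivWithinAt
    have hφ : HasDerivWithinAt φ l (Set.Ici 0) 0 :=
      hF'.comp_hasDerivWithinAt 0 hc hmaps
    -- slope convergence along the dyadic sequence
    have hslope := hasDerivWithinAt_iff_tendsto_slope.mp hφ
    have hseq : Filter.Tendsto (fun k : ℕ => ((1/2:ℝ))^k)
        Filter.atTop (nhdsWithin 0 (Set.Ici 0 \ {0})) := by
      rw [tendsto_nhdsWithin_iff]
      constructor
      · exact tendsto_pow_atTop_nhds_zero_of_lt_one (by norm_num) (by norm_num)
      · apply Filter.Eventually.of_forall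
        intro k
        constructor
        · exact Set.mem_Ici.mpr (by positivity)
        · simp only [Set.mem_singleton_iff]
          positivity
    have hlim : Filter.Tendsto (fun k : ℕ => ((1/2:ℝ)^k)⁻¹ * (φ ((1/2)^k) - φ 0))
        Filter.atTop (nhds l) := by
      have hcomp := hslope.comp hseq
      convert hcomp using 1
      funext k
      simp only [Function.comp_apply]
      rw [slope_def_field]
      rw [sub_zero]
      ring
    -- second differences along the ray
    have hZφ : ∀ s : ℝ, 0 < s → s ≤ 1/2 →
        |φ (2*s) + φ 0 - 2 * φ s| ≤ (M₁ * ‖d‖ ^ σ) * s ^ σ := by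
      intro s hs hs2
      have hne : s • d ≠ 0 := smul_ne_zero (by linarith) hd0
      have hseg : segment ℝ y (y + 2 • (s • d)) ⊆ epigraph m g := by
        intro z hz
        obtain ⟨u, v, hu, hv, huv, rfl⟩ := hz
        have hu' : u = 1 - v := by linarith
        subst hu'
        have hvec : (1 - v) • y + v • (y + 2 • (s • d)) = y + (2 * s * v) • d := by
          module
        rw [hvec]
        exact ray_mem hL hg hy hcone (by positivity)
      have h2 : y + 2 • (s • d) = y + (2 * s) • d := by module
      have h0 : F y = φ 0 := by simp [hφdef]
      have happ := hZ y (s • d) hne hseg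
      rw [h2] at happ
      have hφ2 : F (y + (2 * s) • d) = φ (2 * s) := rfl
      have hφ1 : F (y + s • d) = φ s := rfl
      rw [hφ2, h0, hφ1] at happ
      calc |φ (2*s) + φ 0 - 2 * φ s| ≤ M₁ * ‖s • d‖ ^ σ := happ
        _ = (M₁ * ‖d‖ ^ σ) * s ^ σ := by
            rw [norm_smul, Real.norm_eq_abs, abs_of_pos hs,
              Real.mul_rpow hs.le (norm_nonneg d)]
            ring
    have hmain := dyadic_slope_bound φ l (M₁ * ‖d‖ ^ σ) σ
      (mul_nonneg hM₁ (Real.rpow_nonneg (norm_nonneg d) σ)) hσ hZφ hlim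
    have hφ1 : φ 1 = F (y + d) := by simp [hφdef]
    have hφ0 : φ 0 = F y := by simp [hφdef]
    rw [hφ1, hφ0] at hmain
    calc |l| ≤ |F (y + d) - F y| + |l - (F (y + d) - F y)| := by
          have := abs_sub_abs_le_abs_sub l (F (y + d) - F y)
          have h := abs_add_le (F (y + d) - F y) (l - (F (y + d) - F y))
          calc |l| = |(F (y + d) - F y) + (l - (F (y + d) - F y))| := by ring_nf
            _ ≤ _ := h
      _ ≤ |F (y + d) - F y| + (1 - (1/2:ℝ) ^ (σ - 1))⁻¹ * (M₁ * ‖d‖ ^ σ) := by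
          linarith [hmain]
  · rw [fderivWithin_zero_of_not_differentiableWithinAt hdiff]
    simp only [ContinuousLinearMap.zero_apply, abs_zero]
    positivity


lemma pderiv_bound (hL : 1 ≤ L) (hg : LipschitzWith (Real.toNNReal L) g)
    (F : EuclideanSpace ℝ (Fin (m+1)) → ℝ) (S M₁ σ : ℝ) (hM₁ : 0 ≤ M₁) (hσ : 1 < σ)
    (hS : ∀ z ∈ epigraph m g, |F z| ≤ S)
    (hZ : ∀ x h : EuclideanSpace ℝ (Fin (m + 1)), h ≠ 0 →
      segment ℝ x (x + 2 • h) ⊆ epigraph m g →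
      |F (x + 2 • h) + F x - 2 * F (x + h)| ≤ M₁ * ‖h‖ ^ σ)
    {y : EuclideanSpace ℝ (Fin (m+1))} (hy : y ∈ epigraph m g) (i : Fin (m+1)) :
    |pderivOn m (epigraph m g) i F y| ≤
      4 * S + 2 * (1 - (1/2:ℝ) ^ (σ - 1))⁻¹ * (M₁ * (L+2) ^ σ) := by
  set en : EuclideanSpace ℝ (Fin (m+1)) := EuclideanSpace.single (Fin.last m) 1 with hen
  set d2 : EuclideanSpace ℝ (Fin (m+1)) := (L+1) • en with hd2
  set d1 : EuclideanSpace ℝ (Fin (m+1)) := EuclideanSpace.single i 1 + d2 with hd1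
  have hnormen : ‖en‖ = 1 := by rw [hen, EuclideanSpace.norm_single]; norm_num
  have henlast : en (Fin.last m) = 1 := by
    rw [hen, EuclideanSpace.single_apply, if_pos rfl]
  have hd2last : d2 (Fin.last m) = L + 1 := by
    have : d2 (Fin.last m) = (L+1) * en (Fin.last m) := rfl
    rw [this, henlast, mul_one]
  have hsingle_last_nonneg : (0:ℝ) ≤ EuclideanSpace.single i (1:ℝ) (Fin.last m) := by
    rw [EuclideanSpace.single_apply]
    split <;> norm_num
  have hd1last : L + 1 ≤ d1 (Fin.last m) := by
    have : d1 (Fin.last m) = EuclideanSpace.single i (1:ℝ) (Fin.last m) + d2 (Fin.last m) := rfl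
    rw [this, hd2last]
    linarith
  have hprojd2 : proj m d2 = 0 := by rw [hd2, proj_smul, hen, proj_single_last, smul_zero]
  have hconed2 : L * ‖proj m d2‖ ≤ d2 (Fin.last m) := by
    rw [hprojd2, hd2last, norm_zero, mul_zero]
    linarith
  have hconed1 : L * ‖proj m d1‖ ≤ d1 (Fin.last m) := by
    have h1 : proj m d1 = proj m (EuclideanSpace.single i 1) := by
      rw [hd1, proj_add, hprojd2, add_zero]
    have h2 : ‖proj m (EuclideanSpace.single i (1:ℝ))‖ ≤ 1 := by
      calc ‖proj m (EuclideanSpace.single i (1:ℝ))‖ ≤ ‖EuclideanSpace.single i (1:ℝ)‖ :=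
            norm_proj_le _
        _ = 1 := by rw [EuclideanSpace.norm_single]; norm_num
    calc L * ‖proj m d1‖ ≤ L * 1 := by
          rw [h1]; exact mul_le_mul_of_nonneg_left h2 (by linarith)
      _ ≤ d1 (Fin.last m) := by rw [mul_one]; linarith
  have hd2ne : d2 ≠ 0 := by
    intro h
    rw [h] at hd2last
    have : (0:ℝ) = L + 1 := hd2last
    linarith
  have hd1ne : d1 ≠ 0 := by
    intro h
    rw [h] at hd1last
    have h0 : (0 : EuclideanSpace ℝ (Fin (m+1))) (Fin.last m) = 0 := rfl
    rw [h0] at hd1last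
    linarith
  have hnd2 : ‖d2‖ ≤ L + 2 := by
    rw [hd2, norm_smul, hnormen, Real.norm_eq_abs, abs_of_pos (by linarith), mul_one]
    linarith
  have hnd1 : ‖d1‖ ≤ L + 2 := by
    calc ‖d1‖ ≤ ‖EuclideanSpace.single i (1:ℝ)‖ + ‖d2‖ := norm_add_le _ _
      _ ≤ 1 + (L+1) := by
          rw [EuclideanSpace.norm_single]
          apply add_le_add
          · norm_num
          · rw [hd2, norm_smul, hnormen, Real.norm_eq_abs, abs_of_pos (by linarith), mul_one]
      _ = L + 2 := by ring
  have hmemd1 : y + d1 ∈ epigraph m g := by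
    have := cone_mem hL hg hy hconed1
    exact this
  have hmemd2 : y + d2 ∈ epigraph m g := cone_mem hL hg hy hconed2
  have hb1 := ray_bound hL hg F M₁ σ hM₁ hσ hZ hy hd1ne hconed1
  have hb2 := ray_bound hL hg F M₁ σ hM₁ hσ hZ hy hd2ne hconed2
  have hCρ : (0:ℝ) ≤ (1 - (1/2:ℝ) ^ (σ - 1))⁻¹ := by
    have hρlt : (1/2:ℝ) ^ (σ - 1) < 1 :=
      Real.rpow_lt_one (by norm_num) (by norm_num) (by linarith)
    apply inv_nonneg.mpr; linarith
  have hrp1 : ‖d1‖ ^ σ ≤ (L+2) ^ σ := Real.rpow_le_rpow (norm_nonneg _) hnd1 (by linarith)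
  have hrp2 : ‖d2‖ ^ σ ≤ (L+2) ^ σ := Real.rpow_le_rpow (norm_nonneg _) hnd2 (by linarith)
  have hsplit : pderivOn m (epigraph m g) i F y =
      fderivWithin ℝ F (epigraph m g) y d1 - fderivWithin ℝ F (epigraph m g) y d2 := by
    rw [← map_sub]
    have : d1 - d2 = EuclideanSpace.single i 1 := by rw [hd1]; abel
    rw [this]
    rfl
  have hFd1 : |F (y + d1) - F y| ≤ 2 * S := by
    have h1 := hS _ hmemd1
    have h2 := hS _ hy
    calc |F (y + d1) - F y| ≤ |F (y + d1)| + |F y| := abs_sub _ _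
      _ ≤ 2 * S := by linarith
  have hFd2 : |F (y + d2) - F y| ≤ 2 * S := by
    have h1 := hS _ hmemd2
    have h2 := hS _ hy
    calc |F (y + d2) - F y| ≤ |F (y + d2)| + |F y| := abs_sub _ _
      _ ≤ 2 * S := by linarith
  rw [hsplit]
  have hM1nonneg : (0:ℝ) ≤ M₁ := hM₁
  calc |fderivWithin ℝ F (epigraph m g) y d1 - fderivWithin ℝ F (epigraph m g) y d2| ≤
        |fderivWithin ℝ F (epigraph m g) y d1| + |fderivWithin ℝ F (epigraph m g) y d2| :=
          abs_sub _ _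
    _ ≤ (|F (y + d1) - F y| + (1 - (1/2:ℝ) ^ (σ - 1))⁻¹ * (M₁ * ‖d1‖ ^ σ)) +
        (|F (y + d2) - F y| + (1 - (1/2:ℝ) ^ (σ - 1))⁻¹ * (M₁ * ‖d2‖ ^ σ)) := by
          linarith
    _ ≤ 4 * S + 2 * (1 - (1/2:ℝ) ^ (σ - 1))⁻¹ * (M₁ * (L+2) ^ σ) := by
          have e1 : (1 - (1/2:ℝ) ^ (σ - 1))⁻¹ * (M₁ * ‖d1‖ ^ σ) ≤
              (1 - (1/2:ℝ) ^ (σ - 1))⁻¹ * (M₁ * (L+2) ^ σ) := by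
            apply mul_le_mul_of_nonneg_left _ hCρ
            exact mul_le_mul_of_nonneg_left hrp1 hM1nonneg
          have e2 : (1 - (1/2:ℝ) ^ (σ - 1))⁻¹ * (M₁ * ‖d2‖ ^ σ) ≤
              (1 - (1/2:ℝ) ^ (σ - 1))⁻¹ * (M₁ * (L+2) ^ σ) := by
            apply mul_le_mul_of_nonneg_left _ hCρ
            exact mul_le_mul_of_nonneg_left hrp2 hM1nonneg
          linarith



/-- foldr of composition, peeling off a factor at position `i₀` when everything
before `i₀` is the identity. -/
lemma foldr_peel {X : Type*} : ∀ (n : ℕ) (g : Fin n → (X → X)) (i₀ : Fin n)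
    (_ : ∀ j, j < i₀ → g j = id) (F G : X → X) (_ : g i₀ = F ∘ G),
    (List.ofFn g).foldr (· ∘ ·) id =
      F ∘ (List.ofFn (Function.update g i₀ G)).foldr (· ∘ ·) id := by
  intro n
  induction n with
  | zero => intro g i₀; exact absurd i₀.2 (by omega)
  | succ n ih =>
    intro g i₀ hlt F G hFG
    rw [List.ofFn_succ, List.ofFn_succ (f := Function.update g i₀ G)]
    simp only [List.foldr_cons]
    rcases Fin.eq_zero_or_eq_succ i₀ with h0 | ⟨j, rfl⟩
    · subst h0
      have h1 : Function.update g 0 G 0 = G := Function.update_self 0 G g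
      have h2 : (fun i : Fin n => Function.update g 0 G i.succ) = fun i : Fin n => g i.succ := by
        funext i
        exact Function.update_of_ne (Fin.succ_ne_zero i) G g
      rw [h1, h2, hFG]
      rfl
    · have h0 : g 0 = id := hlt 0 (Fin.succ_pos j)
      have h1 : Function.update g j.succ G 0 = id := by
        rw [Function.update_of_ne (Fin.succ_ne_zero j).symm, h0]
      have h2 : (fun i : Fin n => Function.update g j.succ G i.succ) =
          Function.update (fun i : Fin n => g i.succ) j G := by
        have := Function.update_comp_eq_of_injective g
          (f := Fin.succ (n := n)) (Fin.succ_injective n) j G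
        exact this
      rw [h1, h2]
      have ihh := ih (fun i => g i.succ) j
        (fun k hk => hlt k.succ (by simpa using hk)) F G hFG
      rw [ihh, h0]
      rfl




lemma foldr_id {X : Type*} : ∀ (l : List (X → X)) (_ : ∀ p ∈ l, p = id),
    l.foldr (· ∘ ·) id = id := by
  intro l
  induction l with
  | nil => intro _; rfl
  | cons a l ih =>
    intro h
    rw [List.foldr_cons, h a (by simp), ih (fun p hp => h p (by simp [hp]))]
    rfl

lemma mderivOn_zero {m : ℕ} (D : Set (EuclideanSpace ℝ (Fin (m + 1))))
    (α : Fin (m+1) → ℕ) (hα : ∀ i, α i = 0) (f : EuclideanSpace ℝ (Fin (m + 1)) → ℝ) :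
    mderivOn m D α f = f := by
  unfold mderivOn
  rw [foldr_id _ ?_]
  · rfl
  intro p hp
  rw [List.mem_ofFn] at hp
  obtain ⟨i, rfl⟩ := hp
  simp only [hα i]
  rfl

lemma mderivOn_peel {m : ℕ} (D : Set (EuclideanSpace ℝ (Fin (m + 1))))
    (α : Fin (m+1) → ℕ) (i₀ : Fin (m+1)) (hmin : ∀ j, j < i₀ → α j = 0) (hpos : α i₀ ≠ 0)
    (f : EuclideanSpace ℝ (Fin (m + 1)) → ℝ) :
    mderivOn m D α f =
      pderivOn m D i₀ (mderivOn m D (Function.update α i₀ (α i₀ - 1)) f) := by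
  unfold mderivOn
  have key := foldr_peel (m+1) (fun i => (pderivOn m D i)^[α i]) i₀
    (fun j hj => by simp only [hmin j hj]; rfl)
    (pderivOn m D i₀) ((pderivOn m D i₀)^[α i₀ - 1])
    (by
      obtain ⟨k, hk⟩ := Nat.exists_eq_succ_of_ne_zero hpos
      simp only [hk]
      rw [Function.iterate_succ']
      simp)
  rw [key]
  have harg : (Function.update (fun i => (pderivOn m D i)^[α i]) i₀
      ((pderivOn m D i₀)^[α i₀ - 1])) =
      fun i => (pderivOn m D i)^[Function.update α i₀ (α i₀ - 1) i] := by
    funext i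
    by_cases h : i = i₀
    · subst h; simp
    · simp [Function.update_of_ne h]
  rw [harg]
  rfl

lemma sum_update_pred {m : ℕ} (α : Fin (m+1) → ℕ) (i₀ : Fin (m+1)) (hpos : α i₀ ≠ 0) :
    ∑ i, Function.update α i₀ (α i₀ - 1) i = (∑ i, α i) - 1 := by
  rw [Finset.sum_update_of_mem (Finset.mem_univ i₀)]
  have h1 : ∑ i, α i = (∑ i ∈ Finset.univ.erase i₀, α i) + α i₀ :=
    (Finset.sum_erase_add _ _ (Finset.mem_univ i₀)).symm
  have h2 : ∑ x ∈ Finset.univ \ {i₀}, α x = ∑ i ∈ Finset.univ.erase i₀, α i := by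
    apply Finset.sum_congr _ (fun _ _ => rfl)
    ext j
    simp [Finset.mem_erase, and_comm]
  omega


lemma sup_bound (hL : 1 ≤ L) (hg : LipschitzWith (Real.toNNReal L) g)
    (f : EuclideanSpace ℝ (Fin (m+1)) → ℝ) (M r : ℝ) (hM : 0 ≤ M) (hr : 0 < r)
    (hsup : ∀ x ∈ epigraph m g, |f x| ≤ M)
    (hZyg : ∀ α : Fin (m + 1) → ℕ, ((∑ i, α i : ℕ) : ℝ) < r →
      ∀ x h : EuclideanSpace ℝ (Fin (m + 1)), h ≠ 0 →
        segment ℝ x (x + 2 • h) ⊆ epigraph m g →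
        |mderivOn m (epigraph m g) α f (x + 2 • h) + mderivOn m (epigraph m g) α f x -
            2 * mderivOn m (epigraph m g) α f (x + h)| ≤
          M * ‖h‖ ^ (r - ((∑ i, α i : ℕ) : ℝ))) :
    ∀ k : ℕ, ∀ α : Fin (m + 1) → ℕ, (∑ i, α i) = k → ((k:ℝ) < r) →
      ∀ y ∈ epigraph m g, |mderivOn m (epigraph m g) α f y| ≤
        (4 + (2 * (1 - (1/2:ℝ) ^ ((r + 2 - (⌈r⌉₊:ℝ)) - 1))⁻¹ * ((L+2) ^ r)))^k * M := by
  set σ₀ : ℝ := r + 2 - (⌈r⌉₊:ℝ) with hσ₀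
  set c₂ : ℝ := 2 * (1 - (1/2:ℝ) ^ (σ₀ - 1))⁻¹ * ((L+2) ^ r) with hc₂
  have hσ₀gt : 1 < σ₀ := by
    have := Nat.ceil_lt_add_one hr.le
    rw [hσ₀]
    linarith
  have hρ₀pos : (0:ℝ) < (1/2:ℝ) ^ (σ₀ - 1) := Real.rpow_pos_of_pos (by norm_num) _
  have hρ₀lt : (1/2:ℝ) ^ (σ₀ - 1) < 1 :=
    Real.rpow_lt_one (by norm_num) (by norm_num) (by linarith)
  have hL2r : (0:ℝ) < (L+2) ^ r := Real.rpow_pos_of_pos (by linarith) _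
  have hc₂nonneg : 0 ≤ c₂ := by
    rw [hc₂]
    have : (0:ℝ) ≤ (1 - (1/2:ℝ) ^ (σ₀ - 1))⁻¹ := by
      apply inv_nonneg.mpr; linarith
    positivity
  intro k
  induction k with
  | zero =>
    intro α hsum _ y hy
    have hzero : ∀ i, α i = 0 := by
      intro i
      have := (Finset.sum_eq_zero_iff.mp hsum) i (Finset.mem_univ i)
      exact this
    rw [mderivOn_zero _ α hzero f, pow_zero, one_mul]
    exact hsup y hy
  | succ k ih =>
    intro α hsum hlt y hy
    -- minimal nonzero index
    have hne : (Finset.univ.filter (fun i => α i ≠ 0)).Nonempty := by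
      by_contra hcon
      rw [Finset.not_nonempty_iff_eq_empty, Finset.filter_eq_empty_iff] at hcon
      have : ∑ i, α i = 0 := Finset.sum_eq_zero (fun i hi => by
        have := hcon hi
        simpa using this)
      omega
    set i₀ := (Finset.univ.filter (fun i => α i ≠ 0)).min' hne with hi₀
    have hpos : α i₀ ≠ 0 := by
      have := (Finset.univ.filter (fun i => α i ≠ 0)).min'_mem hne
      rw [← hi₀] at this
      exact (Finset.mem_filter.mp this).2
    have hmin : ∀ j, j < i₀ → α j = 0 := by
      intro j hj
      by_contra hcon
      have hjmem : j ∈ Finset.univ.filter (fun i => α i ≠ 0) := by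
        rw [Finset.mem_filter]
        exact ⟨Finset.mem_univ j, hcon⟩
      have := Finset.min'_le _ j hjmem
      rw [← hi₀] at this
      exact absurd hj (not_lt.mpr this)
    set β := Function.update α i₀ (α i₀ - 1) with hβ
    have hsumβ : ∑ i, β i = k := by
      rw [hβ, sum_update_pred α i₀ hpos, hsum]
      omega
    have hkr : (k:ℝ) < r := by
      have : (k:ℝ) ≤ (k+1:ℕ) := by push_cast; linarith
      linarith
    have hIH := ih β hsumβ hkr
    -- exponent for β
    set σ : ℝ := r - (k:ℝ) with hσdef
    have hσgt : 1 < σ := by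
      rw [hσdef]
      have : ((k+1:ℕ):ℝ) = (k:ℝ) + 1 := by push_cast; ring
      rw [this] at hlt
      linarith
    have hσ₀le : σ₀ ≤ σ := by
      have h1 : k + 1 < ⌈r⌉₊ := Nat.lt_ceil.mpr hlt
      have h2 : ((k:ℝ) + 2) ≤ (⌈r⌉₊:ℝ) := by
        have : (k + 2 : ℕ) ≤ ⌈r⌉₊ := by omega
        exact_mod_cast this
      rw [hσdef, hσ₀]
      linarith
    have hZβ := hZyg β (by rw [hsumβ]; exact hkr)
    have hZβ' : ∀ x h : EuclideanSpace ℝ (Fin (m + 1)), h ≠ 0 →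
        segment ℝ x (x + 2 • h) ⊆ epigraph m g →
        |mderivOn m (epigraph m g) β f (x + 2 • h) + mderivOn m (epigraph m g) β f x -
            2 * mderivOn m (epigraph m g) β f (x + h)| ≤ M * ‖h‖ ^ σ := by
      intro x h h0 hseg
      have := hZβ x h h0 hseg
      rwa [hsumβ] at this
    have hSβ : ∀ z ∈ epigraph m g, |mderivOn m (epigraph m g) β f z| ≤ (4 + c₂)^k * M :=
      hIH
    have hpb := pderiv_bound hL hg (mderivOn m (epigraph m g) β f) ((4 + c₂)^k * M) M σ
      hM hσgt hSβ hZβ' hy i₀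
    rw [mderivOn_peel (epigraph m g) α i₀ hmin hpos f, ← hβ]
    refine le_trans hpb ?_
    -- bound the constant uniformly
    have hmono1 : (1 - (1/2:ℝ) ^ (σ - 1))⁻¹ ≤ (1 - (1/2:ℝ) ^ (σ₀ - 1))⁻¹ := by
      have hρle : (1/2:ℝ) ^ (σ - 1) ≤ (1/2:ℝ) ^ (σ₀ - 1) :=
        Real.rpow_le_rpow_of_exponent_ge (by norm_num) (by norm_num) (by linarith)
      have hρpos : (0:ℝ) < (1/2:ℝ) ^ (σ - 1) := Real.rpow_pos_of_pos (by norm_num) _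
      apply inv_anti₀
      · linarith
      · linarith
    have hmono2 : (L+2) ^ σ ≤ (L+2) ^ r :=
      Real.rpow_le_rpow_of_exponent_le (by linarith) (by
        rw [hσdef]
        have : (0:ℝ) ≤ (k:ℝ) := Nat.cast_nonneg k
        linarith)
    have hterm : 2 * (1 - (1/2:ℝ) ^ (σ - 1))⁻¹ * (M * (L+2) ^ σ) ≤ c₂ * M := by
      rw [hc₂]
      have h1 : (0:ℝ) ≤ (1 - (1/2:ℝ) ^ (σ - 1))⁻¹ := by
        have hρpos : (0:ℝ) < (1/2:ℝ) ^ (σ - 1) := Real.rpow_pos_of_pos (by norm_num) _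
        have hρlt : (1/2:ℝ) ^ (σ - 1) < 1 :=
          Real.rpow_lt_one (by norm_num) (by norm_num) (by linarith)
        apply inv_nonneg.mpr; linarith
      have h2 : (0:ℝ) ≤ (L+2) ^ σ := by positivity
      have h3 : (0:ℝ) ≤ (1 - (1/2:ℝ) ^ (σ₀ - 1))⁻¹ := by
        apply inv_nonneg.mpr; linarith
      nlinarith [mul_le_mul hmono1 hmono2 h2 h3]
    have hpow1 : (1:ℝ) ≤ (4 + c₂)^k := one_le_pow₀ (by linarith)
    have hfin : 4 * ((4 + c₂)^k * M) + c₂ * M ≤ (4 + c₂)^(k+1) * M := by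
      rw [pow_succ]
      nlinarith [mul_le_mul_of_nonneg_left hpow1 (mul_nonneg hc₂nonneg hM)]
    calc 4 * ((4 + c₂)^k * M) + 2 * (1 - (1/2:ℝ) ^ (σ - 1))⁻¹ * (M * (L+2) ^ σ)
        ≤ 4 * ((4 + c₂)^k * M) + c₂ * M := by linarith
      _ ≤ (4 + c₂)^(k+1) * M := hfin

lemma seg_sub_of {x₀ k : EuclideanSpace ℝ (Fin (m+1))}
    (hall : ∀ s : ℝ, 0 ≤ s → s ≤ 2 → x₀ + s • k ∈ epigraph m g) :
    segment ℝ x₀ (x₀ + 2 • k) ⊆ epigraph m g := by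
  intro z hz
  obtain ⟨a, b, ha, hb, hab, rfl⟩ := hz
  have ha' : a = 1 - b := by linarith
  subst ha'
  have hvec : (1 - b) • x₀ + b • (x₀ + 2 • k) = x₀ + (2 * b) • k := by module
  rw [hvec]
  exact hall (2 * b) (by linarith) (by linarith)

set_option maxHeartbeats 2000000 in
lemma zygmund_bound (hL : 1 ≤ L) (hg : LipschitzWith (Real.toNNReal L) g)
    (F : EuclideanSpace ℝ (Fin (m+1)) → ℝ) (M₁ σ : ℝ) (hM₁ : 0 ≤ M₁) (hσpos : 0 < σ)
    (hZ : ∀ x h : EuclideanSpace ℝ (Fin (m + 1)), h ≠ 0 →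
      segment ℝ x (x + 2 • h) ⊆ epigraph m g →
      |F (x + 2 • h) + F x - 2 * F (x + h)| ≤ M₁ * ‖h‖ ^ σ)
    {x h : EuclideanSpace ℝ (Fin (m+1))} (hx : x ∈ epigraph m g) (hh : h ≠ 0)
    (hxp : x + h ∈ epigraph m g) (hxm : x - h ∈ epigraph m g) :
    |F (x + h) + F (x - h) - 2 * F x| ≤ 5 * (M₁ * ((L+3) * ‖h‖) ^ σ) := by
  have hhn : (0:ℝ) < ‖h‖ := norm_pos_iff.mpr hh
  set en : EuclideanSpace ℝ (Fin (m+1)) := EuclideanSpace.single (Fin.last m) 1 with hen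
  have hnormen : ‖en‖ = 1 := by rw [hen, EuclideanSpace.norm_single]; norm_num
  have henlast : en (Fin.last m) = 1 := by
    rw [hen, EuclideanSpace.single_apply, if_pos rfl]
  set v : EuclideanSpace ℝ (Fin (m+1)) := ((L+2) * ‖h‖) • en with hv
  have hnv : ‖v‖ = (L+2) * ‖h‖ := by
    rw [hv, norm_smul, hnormen, Real.norm_eq_abs, abs_of_pos (by positivity), mul_one]
  have hvlast : v (Fin.last m) = (L+2) * ‖h‖ := by
    have : v (Fin.last m) = ((L+2) * ‖h‖) * en (Fin.last m) := rfl
    rw [this, henlast, mul_one]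
  have hprojv : proj m v = 0 := by rw [hv, proj_smul, hen, proj_single_last, smul_zero]
  clear_value en v
  have hph : ‖proj m h‖ ≤ ‖h‖ := norm_proj_le h
  have hlasth : |h (Fin.last m)| ≤ ‖h‖ := abs_last_le_norm h
  have hlasth1 : -‖h‖ ≤ h (Fin.last m) := by
    have := abs_le.mp hlasth; exact this.1
  have hlasth2 : h (Fin.last m) ≤ ‖h‖ := by
    have := abs_le.mp hlasth; exact this.2
  -- generic membership for points of the form  z + (a • v + b • h)
  have combo : ∀ (z : EuclideanSpace ℝ (Fin (m+1))), z ∈ epigraph m g → ∀ a b : ℝ,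
      L * (|b| * ‖proj m h‖) ≤ a * ((L+2) * ‖h‖) + b * h (Fin.last m) →
      z + (a • v + b • h) ∈ epigraph m g := by
    intro z hz a b hab
    apply cone_mem hL hg hz
    have h1 : proj m (a • v + b • h) = b • proj m h := by
      rw [proj_add, proj_smul, proj_smul, hprojv, smul_zero, zero_add]
    have h2 : (a • v + b • h) (Fin.last m) = a * v (Fin.last m) + b * h (Fin.last m) := rfl
    rw [h1, h2, hvlast, norm_smul, Real.norm_eq_abs]
    linarith
  -- the five second differences
  set k1 : EuclideanSpace ℝ (Fin (m+1)) := v - h with hk1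
  set k2 : EuclideanSpace ℝ (Fin (m+1)) := v - (1/2:ℝ) • h with hk2
  set k3 : EuclideanSpace ℝ (Fin (m+1)) := -((1/2:ℝ) • h) with hk3
  set k4 : EuclideanSpace ℝ (Fin (m+1)) := (1/2:ℝ) • v - (1/2:ℝ) • h with hk4
  set k5 : EuclideanSpace ℝ (Fin (m+1)) := -((1/2:ℝ) • h + (1/2:ℝ) • v) with hk5
  clear_value k1 k2 k3 k4 k5
  -- nonvanishing
  have hk1ne : k1 ≠ 0 := by
    intro he
    have : v = h := by rwa [hk1, sub_eq_zero] at he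
    have hn := congrArg norm this
    rw [hnv] at hn
    nlinarith
  have hk2ne : k2 ≠ 0 := by
    intro he
    have : v = (1/2:ℝ) • h := by rwa [hk2, sub_eq_zero] at he
    have hn := congrArg norm this
    rw [hnv, norm_smul, Real.norm_eq_abs] at hn
    have : (L+2) * ‖h‖ = (1/2) * ‖h‖ := by
      rw [hn]; norm_num
    nlinarith
  have hk3ne : k3 ≠ 0 := by
    rw [hk3, neg_ne_zero]
    exact smul_ne_zero (by norm_num) hh
  have hk4ne : k4 ≠ 0 := by
    intro he
    rw [hk4] at he
    apply hk1ne
    rw [hk1]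
    have h2 : v - h = (2:ℝ) • ((1/2:ℝ) • v - (1/2:ℝ) • h) := by module
    rw [h2, he, smul_zero]
  have hk5ne : k5 ≠ 0 := by
    intro he
    rw [hk5, neg_eq_zero] at he
    have h3 : v = -h := by
      apply eq_neg_of_add_eq_zero_right
      have h4 : h + v = (2:ℝ) • ((1/2:ℝ) • h + (1/2:ℝ) • v) := by module
      rw [h4, he, smul_zero]
    have hn := congrArg norm h3
    rw [hnv, norm_neg] at hn
    nlinarith
  -- norm bounds
  have hhalfh : ‖(1/2:ℝ) • h‖ = (1/2) * ‖h‖ := by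
    rw [norm_smul, Real.norm_eq_abs]; norm_num
  have hhalfv : ‖(1/2:ℝ) • v‖ = (1/2) * ((L+2) * ‖h‖) := by
    rw [norm_smul, Real.norm_eq_abs, hnv]; norm_num
  have hnk1 : ‖k1‖ ≤ (L+3) * ‖h‖ := by
    rw [hk1]
    calc ‖v - h‖ ≤ ‖v‖ + ‖h‖ := norm_sub_le _ _
      _ = (L+3) * ‖h‖ := by rw [hnv]; ring
  have hnk2 : ‖k2‖ ≤ (L+3) * ‖h‖ := by
    rw [hk2]
    calc ‖v - (1/2:ℝ) • h‖ ≤ ‖v‖ + ‖(1/2:ℝ) • h‖ := norm_sub_le _ _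
      _ = (L+2) * ‖h‖ + (1/2) * ‖h‖ := by rw [hnv, hhalfh]
      _ ≤ (L+3) * ‖h‖ := by linarith
  have hnk3 : ‖k3‖ ≤ (L+3) * ‖h‖ := by
    rw [hk3, norm_neg, hhalfh]
    nlinarith
  have hnk4 : ‖k4‖ ≤ (L+3) * ‖h‖ := by
    rw [hk4]
    calc ‖(1/2:ℝ) • v - (1/2:ℝ) • h‖ ≤ ‖(1/2:ℝ) • v‖ + ‖(1/2:ℝ) • h‖ := norm_sub_le _ _
      _ = (1/2) * ((L+2) * ‖h‖) + (1/2) * ‖h‖ := by rw [hhalfv, hhalfh]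
      _ ≤ (L+3) * ‖h‖ := by nlinarith
  have hnk5 : ‖k5‖ ≤ (L+3) * ‖h‖ := by
    rw [hk5, norm_neg]
    calc ‖(1/2:ℝ) • h + (1/2:ℝ) • v‖ ≤ ‖(1/2:ℝ) • h‖ + ‖(1/2:ℝ) • v‖ := norm_add_le _ _
      _ = (1/2) * ‖h‖ + (1/2) * ((L+2) * ‖h‖) := by rw [hhalfv, hhalfh]
      _ ≤ (L+3) * ‖h‖ := by nlinarith
  -- segment memberships
  have hseg1 : segment ℝ (x + h) (x + h + 2 • k1) ⊆ epigraph m g := by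
    apply seg_sub_of
    intro s hs0 hs2
    have : x + h + s • k1 = (x + h) + (s • v + (-s) • h) := by rw [hk1]; try module
    rw [this]
    apply combo _ hxp
    rw [abs_neg, abs_of_nonneg hs0]
    have hL0 : (0:ℝ) ≤ L := by linarith
    have hs2' : (0:ℝ) ≤ 2 - s := by linarith
    have hml1 : (0:ℝ) ≤ ‖h‖ - h (Fin.last m) := by linarith
    have hml2 : (0:ℝ) ≤ ‖h‖ + h (Fin.last m) := by linarith
    nlinarith [mul_nonneg hs0 (sub_nonneg.mpr hph),
      mul_nonneg (mul_nonneg hL0 hs0) (sub_nonneg.mpr hph),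
      mul_nonneg hs0 hml1, mul_nonneg hs0 hml2,
      mul_nonneg hs0 hhn.le, mul_nonneg (mul_nonneg hL0 hs0) hhn.le,
      mul_nonneg hs2' hhn.le, mul_nonneg (mul_nonneg hL0 hs2') hhn.le,
      mul_nonneg hs2' (sub_nonneg.mpr hph),
      mul_nonneg (mul_nonneg hL0 hs2') (sub_nonneg.mpr hph),
      mul_nonneg hs2' hml1, mul_nonneg hs2' hml2]
  have hseg2 : segment ℝ x (x + 2 • k2) ⊆ epigraph m g := by
    apply seg_sub_of
    intro s hs0 hs2
    have : x + s • k2 = x + (s • v + (-(s/2)) • h) := by rw [hk2]; try module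
    rw [this]
    apply combo _ hx
    rw [abs_neg, abs_of_nonneg (by linarith : (0:ℝ) ≤ s/2)]
    have hL0 : (0:ℝ) ≤ L := by linarith
    have hs2' : (0:ℝ) ≤ 2 - s := by linarith
    have hml1 : (0:ℝ) ≤ ‖h‖ - h (Fin.last m) := by linarith
    have hml2 : (0:ℝ) ≤ ‖h‖ + h (Fin.last m) := by linarith
    nlinarith [mul_nonneg hs0 (sub_nonneg.mpr hph),
      mul_nonneg (mul_nonneg hL0 hs0) (sub_nonneg.mpr hph),
      mul_nonneg hs0 hml1, mul_nonneg hs0 hml2,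
      mul_nonneg hs0 hhn.le, mul_nonneg (mul_nonneg hL0 hs0) hhn.le,
      mul_nonneg hs2' hhn.le, mul_nonneg (mul_nonneg hL0 hs2') hhn.le,
      mul_nonneg hs2' (sub_nonneg.mpr hph),
      mul_nonneg (mul_nonneg hL0 hs2') (sub_nonneg.mpr hph),
      mul_nonneg hs2' hml1, mul_nonneg hs2' hml2]
  have hseg3 : segment ℝ (x + v) (x + v + 2 • k3) ⊆ epigraph m g := by
    apply seg_sub_of
    intro s hs0 hs2
    have : x + v + s • k3 = x + ((1:ℝ) • v + (-(s/2)) • h) := by rw [hk3]; try module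
    rw [this]
    apply combo _ hx
    rw [abs_neg, abs_of_nonneg (by linarith : (0:ℝ) ≤ s/2)]
    have hL0 : (0:ℝ) ≤ L := by linarith
    have hs2' : (0:ℝ) ≤ 2 - s := by linarith
    have hml1 : (0:ℝ) ≤ ‖h‖ - h (Fin.last m) := by linarith
    have hml2 : (0:ℝ) ≤ ‖h‖ + h (Fin.last m) := by linarith
    nlinarith [mul_nonneg hs0 (sub_nonneg.mpr hph),
      mul_nonneg (mul_nonneg hL0 hs0) (sub_nonneg.mpr hph),
      mul_nonneg hs0 hml1, mul_nonneg hs0 hml2,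
      mul_nonneg hs0 hhn.le, mul_nonneg (mul_nonneg hL0 hs0) hhn.le,
      mul_nonneg hs2' hhn.le, mul_nonneg (mul_nonneg hL0 hs2') hhn.le,
      mul_nonneg hs2' (sub_nonneg.mpr hph),
      mul_nonneg (mul_nonneg hL0 hs2') (sub_nonneg.mpr hph),
      mul_nonneg hs2' hml1, mul_nonneg hs2' hml2]
  have hseg4 : segment ℝ x (x + 2 • k4) ⊆ epigraph m g := by
    apply seg_sub_of
    intro s hs0 hs2
    have : x + s • k4 = x + ((s/2) • v + (-(s/2)) • h) := by rw [hk4]; try module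
    rw [this]
    apply combo _ hx
    rw [abs_neg, abs_of_nonneg (by linarith : (0:ℝ) ≤ s/2)]
    have hL0 : (0:ℝ) ≤ L := by linarith
    have hs2' : (0:ℝ) ≤ 2 - s := by linarith
    have hml1 : (0:ℝ) ≤ ‖h‖ - h (Fin.last m) := by linarith
    have hml2 : (0:ℝ) ≤ ‖h‖ + h (Fin.last m) := by linarith
    nlinarith [mul_nonneg hs0 (sub_nonneg.mpr hph),
      mul_nonneg (mul_nonneg hL0 hs0) (sub_nonneg.mpr hph),
      mul_nonneg hs0 hml1, mul_nonneg hs0 hml2,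
      mul_nonneg hs0 hhn.le, mul_nonneg (mul_nonneg hL0 hs0) hhn.le,
      mul_nonneg hs2' hhn.le, mul_nonneg (mul_nonneg hL0 hs2') hhn.le,
      mul_nonneg hs2' (sub_nonneg.mpr hph),
      mul_nonneg (mul_nonneg hL0 hs2') (sub_nonneg.mpr hph),
      mul_nonneg hs2' hml1, mul_nonneg hs2' hml2]
  have hseg5 : segment ℝ (x + v) (x + v + 2 • k5) ⊆ epigraph m g := by
    apply seg_sub_of
    intro s hs0 hs2
    rcases le_total s 1 with hcase | hcase
    · have : x + v + s • k5 = x + ((1 - s/2) • v + (-(s/2)) • h) := by rw [hk5]; try module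
      rw [this]
      apply combo _ hx
      rw [abs_neg, abs_of_nonneg (by linarith : (0:ℝ) ≤ s/2)]
      have hL0 : (0:ℝ) ≤ L := by linarith
      have hs2' : (0:ℝ) ≤ 2 - s := by linarith
      have hml1 : (0:ℝ) ≤ ‖h‖ - h (Fin.last m) := by linarith
      have hml2 : (0:ℝ) ≤ ‖h‖ + h (Fin.last m) := by linarith
      nlinarith [mul_nonneg hs0 (sub_nonneg.mpr hph),
        mul_nonneg (mul_nonneg hL0 hs0) (sub_nonneg.mpr hph),
        mul_nonneg hs0 hml1, mul_nonneg hs0 hml2,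
        mul_nonneg hs0 hhn.le, mul_nonneg (mul_nonneg hL0 hs0) hhn.le,
        mul_nonneg hs2' hhn.le, mul_nonneg (mul_nonneg hL0 hs2') hhn.le,
        mul_nonneg hs2' (sub_nonneg.mpr hph),
        mul_nonneg (mul_nonneg hL0 hs2') (sub_nonneg.mpr hph),
        mul_nonneg hs2' hml1, mul_nonneg hs2' hml2,
        mul_nonneg (mul_nonneg hL0 (sub_nonneg.mpr hcase)) hhn.le,
        mul_nonneg (sub_nonneg.mpr hcase) hhn.le,
        mul_nonneg (sub_nonneg.mpr hcase) hml1,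
        mul_nonneg (sub_nonneg.mpr hcase) hml2]
    · have : x + v + s • k5 = (x - h) + ((1 - s/2) • v + (1 - s/2) • h) := by rw [hk5]; try module
      rw [this]
      apply combo _ hxm
      rw [abs_of_nonneg (by linarith : (0:ℝ) ≤ 1 - s/2)]
      have hL0 : (0:ℝ) ≤ L := by linarith
      have hs2' : (0:ℝ) ≤ 2 - s := by linarith
      have hml1 : (0:ℝ) ≤ ‖h‖ - h (Fin.last m) := by linarith
      have hml2 : (0:ℝ) ≤ ‖h‖ + h (Fin.last m) := by linarith
      nlinarith [mul_nonneg hs0 (sub_nonneg.mpr hph),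
        mul_nonneg (mul_nonneg hL0 hs0) (sub_nonneg.mpr hph),
        mul_nonneg hs0 hml1, mul_nonneg hs0 hml2,
        mul_nonneg hs0 hhn.le, mul_nonneg (mul_nonneg hL0 hs0) hhn.le,
        mul_nonneg hs2' hhn.le, mul_nonneg (mul_nonneg hL0 hs2') hhn.le,
        mul_nonneg hs2' (sub_nonneg.mpr hph),
        mul_nonneg (mul_nonneg hL0 hs2') (sub_nonneg.mpr hph),
        mul_nonneg hs2' hml1, mul_nonneg hs2' hml2]
  -- apply the hypothesis five times
  have T1 := hZ (x + h) k1 hk1ne hseg1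
  have T2 := hZ x k2 hk2ne hseg2
  have T3 := hZ (x + v) k3 hk3ne hseg3
  have T4 := hZ x k4 hk4ne hseg4
  have T5 := hZ (x + v) k5 hk5ne hseg5
  -- rewrite the points into canonical form
  have e11 : x + h + 2 • k1 = x + ((2:ℝ) • v - h) := by rw [hk1]; try module
  have e12 : x + h + k1 = x + v := by rw [hk1]; try module
  have e21 : x + 2 • k2 = x + ((2:ℝ) • v - h) := by rw [hk2]; try module
  have e22 : x + k2 = x + (v - (1/2:ℝ) • h) := by rw [hk2]; try module
  have e31 : x + v + 2 • k3 = x + (v - h) := by rw [hk3]; try module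
  have e32 : x + v + k3 = x + (v - (1/2:ℝ) • h) := by rw [hk3]; try module
  have e41 : x + 2 • k4 = x + (v - h) := by rw [hk4]; try module
  have e42 : x + k4 = x + ((1/2:ℝ) • v - (1/2:ℝ) • h) := by rw [hk4]; try module
  have e51 : x + v + 2 • k5 = x - h := by rw [hk5]; try module
  have e52 : x + v + k5 = x + ((1/2:ℝ) • v - (1/2:ℝ) • h) := by rw [hk5]; try module
  rw [e11, e12] at T1
  rw [e21, e22] at T2
  rw [e31, e32] at T3
  rw [e41, e42] at T4
  rw [e51, e52] at T5
  -- the magic identity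
  have hident : F (x + h) + F (x - h) - 2 * F x =
      (F (x + ((2:ℝ) • v - h)) + F (x + h) - 2 * F (x + v))
      - (F (x + ((2:ℝ) • v - h)) + F x - 2 * F (x + (v - (1/2:ℝ) • h)))
      + (F (x + (v - h)) + F (x + v) - 2 * F (x + (v - (1/2:ℝ) • h)))
      - (F (x + (v - h)) + F x - 2 * F (x + ((1/2:ℝ) • v - (1/2:ℝ) • h)))
      + (F (x - h) + F (x + v) - 2 * F (x + ((1/2:ℝ) • v - (1/2:ℝ) • h))) := by
    ring
  -- bound each kᵢ norm term
  have hb : ∀ k' : EuclideanSpace ℝ (Fin (m+1)), ‖k'‖ ≤ (L+3) * ‖h‖ →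
      M₁ * ‖k'‖ ^ σ ≤ M₁ * ((L+3) * ‖h‖) ^ σ := by
    intro k' hk'
    apply mul_le_mul_of_nonneg_left _ hM₁
    exact Real.rpow_le_rpow (norm_nonneg _) hk' hσpos.le
  have B1 := le_trans T1 (hb k1 hnk1)
  have B2 := le_trans T2 (hb k2 hnk2)
  have B3 := le_trans T3 (hb k3 hnk3)
  have B4 := le_trans T4 (hb k4 hnk4)
  have B5 := le_trans T5 (hb k5 hnk5)
  rw [hident]
  set E1 := F (x + ((2:ℝ) • v - h)) + F (x + h) - 2 * F (x + v)
  set E2 := F (x + ((2:ℝ) • v - h)) + F x - 2 * F (x + (v - (1/2:ℝ) • h))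
  set E3 := F (x + (v - h)) + F (x + v) - 2 * F (x + (v - (1/2:ℝ) • h))
  set E4 := F (x + (v - h)) + F x - 2 * F (x + ((1/2:ℝ) • v - (1/2:ℝ) • h))
  set E5 := F (x - h) + F (x + v) - 2 * F (x + ((1/2:ℝ) • v - (1/2:ℝ) • h))
  have habs : |E1 - E2 + E3 - E4 + E5| ≤ |E1| + |E2| + |E3| + |E4| + |E5| := by
    calc |E1 - E2 + E3 - E4 + E5| ≤ |E1 - E2 + E3 - E4| + |E5| := abs_add_le _ _
      _ ≤ |E1 - E2 + E3| + |E4| + |E5| := by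
          have := abs_sub (E1 - E2 + E3) E4
          linarith
      _ ≤ |E1 - E2| + |E3| + |E4| + |E5| := by
          have := abs_add_le (E1 - E2) E3
          linarith
      _ ≤ |E1| + |E2| + |E3| + |E4| + |E5| := by
          have := abs_sub E1 E2
          linarith
  have hB1 : |E1| ≤ M₁ * ((L+3) * ‖h‖) ^ σ := B1
  have hB2 : |E2| ≤ M₁ * ((L+3) * ‖h‖) ^ σ := B2
  have hB3 : |E3| ≤ M₁ * ((L+3) * ‖h‖) ^ σ := B3
  have hB4 : |E4| ≤ M₁ * ((L+3) * ‖h‖) ^ σ := B4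
  have hB5 : |E5| ≤ M₁ * ((L+3) * ‖h‖) ^ σ := B5
  linarith

end HZaux

open HZaux


/-- Equivalence of Hölder–Zygmund seminorms (Proposition 5.2). -/
theorem stmt1 (m : ℕ) (hm : 1 ≤ m) (L r : ℝ) (hL : 1 ≤ L) (hr : 0 < r) :
    ∃ C : ℝ, ∀ g : EuclideanSpace ℝ (Fin m) → ℝ, LipschitzWith (Real.toNNReal L) g →
      ∀ (f : EuclideanSpace ℝ (Fin (m + 1)) → ℝ) (M : ℝ),
        (∀ α : Fin (m + 1) → ℕ, ((∑ i, α i : ℕ) : ℝ) < r →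
          ContinuousOn (mderivOn m (epigraph m g) α f) (epigraph m g)) →
        (∀ x ∈ epigraph m g, |f x| ≤ M) →
        (∀ α : Fin (m + 1) → ℕ, ((∑ i, α i : ℕ) : ℝ) < r →
          ∀ x h : EuclideanSpace ℝ (Fin (m + 1)), h ≠ 0 →
            segment ℝ x (x + 2 • h) ⊆ epigraph m g →
            |mderivOn m (epigraph m g) α f (x + 2 • h) + mderivOn m (epigraph m g) α f x -
                2 * mderivOn m (epigraph m g) α f (x + h)| ≤
              M * ‖h‖ ^ (r - ((∑ i, α i : ℕ) : ℝ))) →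
        ∀ α : Fin (m + 1) → ℕ, ((∑ i, α i : ℕ) : ℝ) < r →
          ∀ x ∈ epigraph m g, ∀ h : EuclideanSpace ℝ (Fin (m + 1)), h ≠ 0 →
            x + h ∈ epigraph m g → x - h ∈ epigraph m g →
            |mderivOn m (epigraph m g) α f x| +
              |mderivOn m (epigraph m g) α f (x + h) + mderivOn m (epigraph m g) α f (x - h) -
                  2 * mderivOn m (epigraph m g) α f x| / ‖h‖ ^ (r - ((∑ i, α i : ℕ) : ℝ)) ≤
            C * M := by
  classical
  set c₂ : ℝ := 2 * (1 - (1/2:ℝ) ^ ((r + 2 - (⌈r⌉₊:ℝ)) - 1))⁻¹ * ((L+2) ^ r) with hc₂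
  refine ⟨(4 + c₂) ^ (⌈r⌉₊) + 5 * (L+3) ^ r, ?_⟩
  intro g hg f M _hcont hsup hZyg α hα x hx h hh hxp hxm
  have hM : 0 ≤ M := le_trans (abs_nonneg _) (hsup x hx)
  have hσpos : 0 < r - ((∑ i, α i : ℕ) : ℝ) := by linarith
  -- constant facts
  have hσ₀gt : 1 < r + 2 - (⌈r⌉₊:ℝ) := by
    have := Nat.ceil_lt_add_one hr.le
    linarith
  have hρ₀lt : (1/2:ℝ) ^ ((r + 2 - (⌈r⌉₊:ℝ)) - 1) < 1 :=
    Real.rpow_lt_one (by norm_num) (by norm_num) (by linarith)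
  have hc₂nonneg : 0 ≤ c₂ := by
    rw [hc₂]
    have h1 : (0:ℝ) ≤ (1 - (1/2:ℝ) ^ ((r + 2 - (⌈r⌉₊:ℝ)) - 1))⁻¹ := by
      apply inv_nonneg.mpr; linarith
    have h2 : (0:ℝ) ≤ (L+2) ^ r := (Real.rpow_pos_of_pos (by linarith) r).le
    positivity
  -- first part: sup bound
  have hsb := sup_bound hL hg f M r hM hr hsup hZyg (∑ i, α i) α rfl hα x hx
  have hpow_le : (4 + c₂) ^ (∑ i, α i) ≤ (4 + c₂) ^ (⌈r⌉₊) := by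
    apply pow_le_pow_right₀ (by linarith)
    have : (∑ i, α i) < ⌈r⌉₊ := Nat.lt_ceil.mpr hα
    omega
  have hpart1 : |mderivOn m (epigraph m g) α f x| ≤ (4 + c₂) ^ (⌈r⌉₊) * M := by
    calc |mderivOn m (epigraph m g) α f x| ≤ (4 + c₂) ^ (∑ i, α i) * M := hsb
      _ ≤ (4 + c₂) ^ (⌈r⌉₊) * M := mul_le_mul_of_nonneg_right hpow_le hM
  -- second part: Zygmund bound
  have hzb := zygmund_bound hL hg (mderivOn m (epigraph m g) α f) M
    (r - ((∑ i, α i : ℕ) : ℝ)) hM hσpos (hZyg α hα) hx hh hxp hxm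
  have hhn : (0:ℝ) < ‖h‖ := norm_pos_iff.mpr hh
  have hpowh : (0:ℝ) < ‖h‖ ^ (r - ((∑ i, α i : ℕ) : ℝ)) := Real.rpow_pos_of_pos hhn _
  have hsplit : ((L+3) * ‖h‖) ^ (r - ((∑ i, α i : ℕ) : ℝ)) =
      (L+3) ^ (r - ((∑ i, α i : ℕ) : ℝ)) * ‖h‖ ^ (r - ((∑ i, α i : ℕ) : ℝ)) :=
    Real.mul_rpow (by linarith) (norm_nonneg h)
  have hL3 : (L+3) ^ (r - ((∑ i, α i : ℕ) : ℝ)) ≤ (L+3) ^ r := by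
    apply Real.rpow_le_rpow_of_exponent_le (by linarith)
    have : (0:ℝ) ≤ ((∑ i, α i : ℕ) : ℝ) := Nat.cast_nonneg _
    linarith
  have hpart2 : |mderivOn m (epigraph m g) α f (x + h) + mderivOn m (epigraph m g) α f (x - h) -
      2 * mderivOn m (epigraph m g) α f x| / ‖h‖ ^ (r - ((∑ i, α i : ℕ) : ℝ)) ≤
      5 * (L+3) ^ r * M := by
    rw [div_le_iff₀ hpowh]
    calc |mderivOn m (epigraph m g) α f (x + h) + mderivOn m (epigraph m g) α f (x - h) -
        2 * mderivOn m (epigraph m g) α f x|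
        ≤ 5 * (M * ((L+3) * ‖h‖) ^ (r - ((∑ i, α i : ℕ) : ℝ))) := hzb
      _ = 5 * M * (L+3) ^ (r - ((∑ i, α i : ℕ) : ℝ)) * ‖h‖ ^ (r - ((∑ i, α i : ℕ) : ℝ)) := by
          rw [hsplit]; ring
      _ ≤ 5 * (L+3) ^ r * M * ‖h‖ ^ (r - ((∑ i, α i : ℕ) : ℝ)) := by
          apply mul_le_mul_of_nonneg_right _ hpowh.le
          calc 5 * M * (L+3) ^ (r - ((∑ i, α i : ℕ) : ℝ)) ≤ 5 * M * (L+3) ^ r := by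
                apply mul_le_mul_of_nonneg_left hL3 (by linarith)
            _ = 5 * (L+3) ^ r * M := by ring
  calc |mderivOn m (epigraph m g) α f x| +
      |mderivOn m (epigraph m g) α f (x + h) + mderivOn m (epigraph m g) α f (x - h) -
          2 * mderivOn m (epigraph m g) α f x| / ‖h‖ ^ (r - ((∑ i, α i : ℕ) : ℝ))
      ≤ (4 + c₂) ^ (⌈r⌉₊) * M + 5 * (L+3) ^ r * M := by linarith
    _ = ((4 + c₂) ^ (⌈r⌉₊) + 5 * (L+3) ^ r) * M := by ring
end

section
/- Integral estimate (Lemma 6.2): Let m ≥ 1 be an integer, let β ≥ 0, μ₁ ≥ 0, λ ∈ ℝ and ε > 0, and set β′ = β − λ + 1 + min{0, (λ − μ₁ + 1)/2 − ε}. Then there exists a constant C, depending only on m, β, μ₁, λ and ε, such that for every δ ∈ (0,1) the integral I(δ) = ∫_{[0,1]} ∫_{[0,1]} ∫_{t∈[0,1]^m} s₁^β · (δ + s₁ + s₂ + |t|²)^{−(1+μ₁)} · (δ + s₁ + s₂ + |t|)^{−(m−1+λ−μ₁)} dt ds₂ ds₁ satisfies: I(δ) ≤ C · δ^{β′} if β′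 < 0, and I(δ) ≤ C if β′ > 0. -/
set_option maxHeartbeats 1000000
open MeasureTheory Set Real

lemma cmp3 {u x y : ℝ} (hu : 0 < u) (hu3 : u ≤ 3) (hxy : x ≤ y) :
    u ^ (-x) ≤ 3 ^ (y - x) * u ^ (-y) := by
  have h1 : u ^ (-x) = u ^ (y - x) * u ^ (-y) := by
    rw [← Real.rpow_add hu]; ring_nf
  rw [h1]
  exact mul_le_mul_of_nonneg_right (Real.rpow_le_rpow hu.le hu3 (by linarith))
    (Real.rpow_nonneg hu.le _)

/-- ∫_{[0,1]} s^r ds = 1/(r+1) for r > -1. -/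
lemma int_s_rpow {r : ℝ} (hr : -1 < r) :
    ∫ s in Icc (0:ℝ) 1, s ^ r = 1 / (r + 1) := by
  rw [integral_Icc_eq_integral_Ioc, ← intervalIntegral.integral_of_le (by norm_num : (0:ℝ) ≤ 1),
    integral_rpow (Or.inl hr)]
  rw [Real.one_rpow, Real.zero_rpow (by linarith)]
  ring

/-- ∫_{[0,1]} (v+s)^r ds ≤ v^{r+1}/(-r-1) for r < -1, v > 0. -/
lemma intB {v r : ℝ} (hv : 0 < v) (hr : r < -1) :
    ∫ s in Icc (0:ℝ) 1, (v + s) ^ r ≤ v ^ (r + 1) / (-r - 1) := by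
  have h1 : ∫ s in Icc (0:ℝ) 1, (v + s) ^ r = ∫ x in v..(v+1), x ^ r := by
    rw [integral_Icc_eq_integral_Ioc, ← intervalIntegral.integral_of_le (by norm_num : (0:ℝ) ≤ 1)]
    have := intervalIntegral.integral_comp_add_left (a := 0) (b := 1) (fun x => x ^ r) v
    simpa using this
  rw [h1, integral_rpow (Or.inr ⟨by linarith, by
    rw [Set.uIcc_of_le (by linarith)]
    intro h; exact absurd h.1 (by linarith)⟩)]
  have h2 : ((v+1) ^ (r + 1) - v ^ (r + 1)) / (r + 1)
      = (v ^ (r + 1) - (v+1) ^ (r + 1)) / (-r - 1) := by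
    rw [div_eq_div_iff (by linarith) (by linarith)]; ring
  rw [h2]
  gcongr
  · linarith
  · have := Real.rpow_nonneg (by linarith : (0:ℝ) ≤ v + 1) (r + 1)
    linarith

lemma contOn_shift_rpow {v : ℝ} (q : ℝ) (hv : 0 < v) (s : Set ℝ) (hs : ∀ x ∈ s, 0 ≤ x) :
    ContinuousOn (fun x : ℝ => (v + x) ^ q) s :=
  ContinuousOn.rpow_const (by fun_prop) (fun x hx => Or.inl (by have := hs x hx; positivity))

lemma integrableOn_shift_rpow {v : ℝ} (q : ℝ) (hv : 0 < v) :
    IntegrableOn (fun x : ℝ => (v + x) ^ q) (Icc (0:ℝ) 1) :=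
  (contOn_shift_rpow q hv _ (fun x hx => hx.1)).integrableOn_compact isCompact_Icc

lemma ae_Ioc01 : ∀ᵐ s ∂(volume.restrict (Icc (0:ℝ) 1)), 0 < s ∧ s ≤ 1 := by
  have h1 := ae_restrict_mem (μ := volume) (measurableSet_Icc : MeasurableSet (Icc (0:ℝ) 1))
  have h2 : ∀ᵐ (s : ℝ) ∂(volume.restrict (Icc (0:ℝ) 1)), s ≠ 0 :=
    ae_restrict_of_ae (by simp [ae_iff])
  filter_upwards [h1, h2] with s hs hs0
  exact ⟨lt_of_le_of_ne hs.1 (Ne.symm hs0), hs.2⟩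

lemma integrableOn_s_rpow {r : ℝ} (hr : -1 < r) :
    IntegrableOn (fun s : ℝ => s ^ r) (Icc (0:ℝ) 1) :=
  (integrableOn_Icc_iff_integrableOn_Ioc enorm_ne_top).2
    (intervalIntegral.intervalIntegrable_rpow' hr).1

/-- 0 ≤ q < 1 : bounded by constant. -/
lemma intB_lt {v q : ℝ} (hv : 0 < v) (hq0 : 0 ≤ q) (hq : q < 1) :
    ∫ s in Icc (0:ℝ) 1, (v + s) ^ (-q) ≤ 1 / (-q + 1) := by
  have h := int_s_rpow (r := -q) (by linarith)
  calc ∫ s in Icc (0:ℝ) 1, (v + s) ^ (-q)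
      ≤ ∫ s in Icc (0:ℝ) 1, s ^ (-q) := by
        refine integral_mono_of_nonneg (ae_Ioc01.mono fun s hs => Real.rpow_nonneg (by linarith [hs.1]) _)
          (integrableOn_s_rpow (by linarith)) (ae_Ioc01.mono fun s hs => ?_)
        exact Real.rpow_le_rpow_of_nonpos hs.1 (by linarith) (by linarith)
    _ = 1 / (-q + 1) := h

/-- q = 1 : bound with v^{-1/2}. -/
lemma intB_eq {v : ℝ} (hv : 0 < v) :
    ∫ s in Icc (0:ℝ) 1, (v + s) ^ (-(1:ℝ)) ≤ 2 * v ^ (-(1/2 : ℝ)) := by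
  have key : ∀ s : ℝ, 0 < s → (v + s) ^ (-(1:ℝ)) ≤ v ^ (-(1/2:ℝ)) * s ^ (-(1/2:ℝ)) := by
    intro s hs
    have h1 : (v + s) ^ (-(1:ℝ)) = (v + s) ^ (-(1/2:ℝ)) * (v + s) ^ (-(1/2:ℝ)) := by
      rw [← Real.rpow_add (by linarith)]; norm_num
    rw [h1]
    exact mul_le_mul (Real.rpow_le_rpow_of_nonpos hv (by linarith) (by norm_num))
      (Real.rpow_le_rpow_of_nonpos hs (by linarith) (by norm_num))
      (Real.rpow_nonneg (by linarith) _) (Real.rpow_nonneg hv.le _)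
  calc ∫ s in Icc (0:ℝ) 1, (v + s) ^ (-(1:ℝ))
      ≤ ∫ s in Icc (0:ℝ) 1, v ^ (-(1/2:ℝ)) * s ^ (-(1/2:ℝ)) := by
        refine integral_mono_of_nonneg (ae_Ioc01.mono fun s hs => Real.rpow_nonneg (by linarith [hs.1]) _)
          ((integrableOn_s_rpow (by norm_num)).const_mul _)
          (ae_Ioc01.mono fun s hs => key s hs.1)
    _ = v ^ (-(1/2:ℝ)) * ∫ s in Icc (0:ℝ) 1, s ^ (-(1/2:ℝ)) := integral_const_mul _ _
    _ ≤ 2 * v ^ (-(1/2:ℝ)) := by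
        rw [int_s_rpow (by norm_num)]
        norm_num [mul_comm]

/-- q > p + 1 ≥ 1 : decay v^{p+1-q}. -/
lemma intC {v p q : ℝ} (hv : 0 < v) (hp : 0 ≤ p) (hq : p + 1 < q) :
    ∫ s in Icc (0:ℝ) 1, s ^ p * (v + s) ^ (-q) ≤ v ^ (p + 1 - q) / (q - p - 1) := by
  calc ∫ s in Icc (0:ℝ) 1, s ^ p * (v + s) ^ (-q)
      ≤ ∫ s in Icc (0:ℝ) 1, (v + s) ^ (p - q) := by
        refine integral_mono_of_nonneg (ae_Ioc01.mono fun s hs => mul_nonneg (Real.rpow_nonneg hs.1.le _) (Real.rpow_nonneg (by linarith) _))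
          (integrableOn_shift_rpow _ hv) (ae_Ioc01.mono fun s hs => ?_)
        have h1 : (v + s) ^ (p - q) = (v + s) ^ p * (v + s) ^ (-q) := by
          rw [← Real.rpow_add (by linarith)]; ring_nf
        show s ^ p * (v + s) ^ (-q) ≤ (v + s) ^ (p - q)
        rw [h1]
        exact mul_le_mul_of_nonneg_right
          (Real.rpow_le_rpow hs.1.le (by linarith) hp)
          (Real.rpow_nonneg (by linarith) _)
    _ ≤ v ^ (p - q + 1) / (-(p - q) - 1) := intB hv (by linarith)
    _ = v ^ (p + 1 - q) / (q - p - 1) := by ring_nf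

/-- 0 ≤ q < p + 1 : bounded by constant. -/
lemma intD {v p q : ℝ} (hv : 0 < v) (hp : 0 ≤ p) (hq0 : 0 ≤ q) (hq : q < p + 1) :
    ∫ s in Icc (0:ℝ) 1, s ^ p * (v + s) ^ (-q) ≤ 1 / (p - q + 1) := by
  calc ∫ s in Icc (0:ℝ) 1, s ^ p * (v + s) ^ (-q)
      ≤ ∫ s in Icc (0:ℝ) 1, s ^ (p - q) := by
        refine integral_mono_of_nonneg (ae_Ioc01.mono fun s hs => mul_nonneg (Real.rpow_nonneg hs.1.le _) (Real.rpow_nonneg (by linarith) _))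
          (integrableOn_s_rpow (by linarith)) (ae_Ioc01.mono fun s hs => ?_)
        have h1 : s ^ (p - q) = s ^ p * s ^ (-q) := by
          rw [← Real.rpow_add hs.1]; ring_nf
        show s ^ p * (v + s) ^ (-q) ≤ s ^ (p - q)
        rw [h1]
        exact mul_le_mul_of_nonneg_left
          (Real.rpow_le_rpow_of_nonpos hs.1 (by linarith) (by linarith))
          (Real.rpow_nonneg hs.1.le _)
    _ = 1 / (p - q + 1) := int_s_rpow (by linarith)

lemma bump {u e σp : ℝ} (c : ℝ) (hu : 0 < u) (hu3 : u ≤ 3) (hc : 0 ≤ c) (he : e ≤ σp) :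
    c * u ^ (-e) ≤ c * 3 ^ (σp - e) * u ^ (-σp) := by
  rw [mul_assoc]; exact mul_le_mul_of_nonneg_left (cmp3 hu hu3 he) hc

lemma rpow_collect {u : ℝ} (hu : 0 < u) (a b c : ℝ) (h : a + b = c) :
    u ^ a * u ^ b = u ^ c := by rw [← Real.rpow_add hu, h]

lemma rpow_rpow_half {u : ℝ} (hu : 0 < u) (e : ℝ) :
    (u ^ ((1:ℝ)/2)) ^ e = u ^ (e/2) := by
  rw [← Real.rpow_mul hu.le]; congr 1; ring

lemma sq_rpow {y : ℝ} (hy : 0 ≤ y) (e : ℝ) : (y ^ 2) ^ e = y ^ (2 * e) := by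
  rw [← Real.rpow_natCast y 2, ← Real.rpow_mul hy]; norm_num

lemma half_pow_le {u : ℝ} (hu : 0 < u) (hu3 : u ≤ 3) : u ^ ((1:ℝ)/2) ≤ 2 := by
  have h1 : u ^ ((1:ℝ)/2) ≤ 3 ^ ((1:ℝ)/2) := Real.rpow_le_rpow hu.le hu3 (by norm_num)
  have h2 : (3:ℝ) ^ ((1:ℝ)/2) = Real.sqrt 3 := (Real.sqrt_eq_rpow 3).symm
  have h3 : Real.sqrt 3 ≤ 2 := by
    have := Real.sqrt_le_sqrt (by norm_num : (3:ℝ) ≤ 4)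
    have h4 : Real.sqrt 4 = 2 := by
      rw [show (4:ℝ) = 2 ^ 2 by norm_num, Real.sqrt_sq (by norm_num : (0:ℝ) ≤ 2)]
    linarith
  linarith [h1, h2 ▸ h1]

/-- ∫_{(w,R]} y^{-p} ≤ w^{1-p}/(p-1) for p > 1. -/
lemma intE {w p : ℝ} (R : ℝ) (hw : 0 < w) (hp : 1 < p) :
    ∫ y in Ioc w R, y ^ (-p) ≤ w ^ (1 - p) / (p - 1) := by
  have hae : ∀ᵐ y ∂(volume.restrict (Ioi w)), 0 ≤ y ^ (-p) :=
    (ae_restrict_mem measurableSet_Ioi).mono fun y hy =>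
      Real.rpow_nonneg (le_trans hw.le (le_of_lt hy)) _
  have h1 : ∫ y in Ioc w R, y ^ (-p) ≤ ∫ y in Ioi w, y ^ (-p) :=
    setIntegral_mono_set (integrableOn_Ioi_rpow_of_lt (by linarith) hw) hae
      (HasSubset.Subset.eventuallyLE Ioc_subset_Ioi_self)
  rw [integral_Ioi_rpow_of_lt (by linarith : -p < -1) hw] at h1
  have h2 : -w ^ (-p + 1) / (-p + 1) = w ^ (1 - p) / (p - 1) := by
    rw [show (-p + 1 : ℝ) = 1 - p by ring]
    rw [div_eq_div_iff (by linarith) (by linarith)]; ring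
  linarith [h2 ▸ h1]

/-- ∫_{(w,R]} y^{-p} ≤ R^{1-p}/(1-p) for p < 1, 0 ≤ w, 0 < R. -/
lemma intF {w p R : ℝ} (hw : 0 ≤ w) (hp : p < 1) (hR : 0 < R) :
    ∫ y in Ioc w R, y ^ (-p) ≤ R ^ (1 - p) / (1 - p) := by
  have hint : IntegrableOn (fun y : ℝ => y ^ (-p)) (Ioc 0 R) :=
    (intervalIntegral.intervalIntegrable_rpow' (by linarith : (-1:ℝ) < -p)).1
  have hae : ∀ᵐ y ∂(volume.restrict (Ioc (0:ℝ) R)), 0 ≤ y ^ (-p) :=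
    (ae_restrict_mem measurableSet_Ioc).mono fun y hy => Real.rpow_nonneg hy.1.le _
  have h1 : ∫ y in Ioc w R, y ^ (-p) ≤ ∫ y in Ioc 0 R, y ^ (-p) :=
    setIntegral_mono_set hint hae
      (HasSubset.Subset.eventuallyLE (Ioc_subset_Ioc_left hw))
  have h2 : ∫ y in Ioc (0:ℝ) R, y ^ (-p) = R ^ (1 - p) / (1 - p) := by
    rw [← intervalIntegral.integral_of_le hR.le, integral_rpow (Or.inl (by linarith))]
    rw [Real.zero_rpow (by linarith : -p + 1 ≠ 0)]
    rw [show (-p + 1 : ℝ) = 1 - p by ring]; ring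
  linarith [h2 ▸ h1]

lemma lemL (R μ₁ lam ε : ℝ) (hR : 3 ≤ R) (hμ₁ : 0 ≤ μ₁) (hε : 0 < ε) :
    ∃ C, 0 ≤ C ∧ ∀ u : ℝ, 0 < u → u ≤ 3 →
      (∫ y in Ioc (0:ℝ) R, (u + y ^ 2) ^ (-(1 + μ₁)) * (u + y) ^ (μ₁ - lam))
        ≤ C * u ^ (-(max (lam + 1 + max 0 ((μ₁ - lam - 1) / 2 + ε)) 0)) := by
  set κ := max 0 ((μ₁ - lam - 1) / 2 + ε) with hκdef
  set σ := lam + 1 + κ with hσdef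
  set σp := max σ 0 with hσpdef
  have hκ0 : 0 ≤ κ := le_max_left _ _
  have hκ2 : (μ₁ - lam - 1) / 2 + ε ≤ κ := le_max_right _ _
  have hσ1 : (1 + μ₁ + lam) / 2 + ε ≤ σ := by rw [hσdef]; linarith
  have hσ2 : lam + 1 ≤ σ := by rw [hσdef]; linarith
  have hσp1 : σ ≤ σp := le_max_left _ _
  have hσp0 : 0 ≤ σp := le_max_right _ _
  -- Claim 1 : near piece
  have claim1 : ∃ C1, 0 ≤ C1 ∧ ∀ u : ℝ, 0 < u → u ≤ 3 →
      (∫ y in Ioc (0:ℝ) (u ^ ((1:ℝ)/2)), (u + y ^ 2) ^ (-(1 + μ₁)) * (u + y) ^ (μ₁ - lam))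
        ≤ C1 * u ^ (-σp) := by
    have main : ∀ u : ℝ, 0 < u → u ≤ 3 → ∀ M, 0 ≤ M →
        (∀ y ∈ Ioc (0:ℝ) (u ^ ((1:ℝ)/2)), (u + y) ^ (μ₁ - lam) ≤ M) →
        (∫ y in Ioc (0:ℝ) (u ^ ((1:ℝ)/2)), (u + y ^ 2) ^ (-(1 + μ₁)) * (u + y) ^ (μ₁ - lam))
          ≤ u ^ (-(1 + μ₁)) * M * u ^ ((1:ℝ)/2) := by
      intro u hu hu3 M hM hMy
      set w := u ^ ((1:ℝ)/2) with hwdef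
      have hw0 : 0 < w := Real.rpow_pos_of_pos hu _
      calc ∫ y in Ioc (0:ℝ) w, (u + y ^ 2) ^ (-(1 + μ₁)) * (u + y) ^ (μ₁ - lam)
          ≤ ∫ _y in Ioc (0:ℝ) w, u ^ (-(1 + μ₁)) * M := by
            refine integral_mono_of_nonneg
              ((ae_restrict_mem measurableSet_Ioc).mono fun y hy =>
                mul_nonneg (Real.rpow_nonneg (by positivity) _)
                  (Real.rpow_nonneg (by linarith [hy.1]) _))
              (integrableOn_const (by rw [Real.volume_Ioc]; exact ENNReal.ofReal_ne_top))
              ((ae_restrict_mem measurableSet_Ioc).mono fun y hy => ?_)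
            refine mul_le_mul ?_ (hMy y hy) (Real.rpow_nonneg (by linarith [hy.1]) _)
              (Real.rpow_nonneg hu.le _)
            exact Real.rpow_le_rpow_of_nonpos hu (le_add_of_nonneg_right (sq_nonneg y)) (by linarith)
        _ = u ^ (-(1 + μ₁)) * M * w := by
            rw [setIntegral_const, Real.volume_real_Ioc, smul_eq_mul, sub_zero,
              max_eq_left hw0.le, mul_comm]
    rcases le_or_gt μ₁ lam with hcase | hcase
    · refine ⟨3 ^ (σp - (lam + 1/2)), Real.rpow_nonneg (by norm_num) _, fun u hu hu3 => ?_⟩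
      have hb := main u hu hu3 (u ^ (μ₁ - lam)) (Real.rpow_nonneg hu.le _)
        (fun y hy => Real.rpow_le_rpow_of_nonpos hu (by linarith [hy.1]) (by linarith))
      have heq : u ^ (-(1 + μ₁)) * u ^ (μ₁ - lam) * u ^ ((1:ℝ)/2) = u ^ (-(lam + 1/2)) := by
        rw [rpow_collect hu (-(1 + μ₁)) (μ₁ - lam) (-(1 + μ₁) + (μ₁ - lam)) rfl,
          rpow_collect hu _ _ (-(lam + 1/2)) (by ring)]
      rw [heq] at hb
      exact hb.trans (cmp3 hu hu3 (by linarith))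
    · refine ⟨3 ^ (μ₁ - lam) * 3 ^ (σp - (1 + μ₁ + lam)/2),
        mul_nonneg (Real.rpow_nonneg (by norm_num) _) (Real.rpow_nonneg (by norm_num) _),
        fun u hu hu3 => ?_⟩
      have hw0 : 0 < u ^ ((1:ℝ)/2) := Real.rpow_pos_of_pos hu _
      have hw2 : u ^ ((1:ℝ)/2) ≤ 2 := half_pow_le hu hu3
      have hww : u ^ ((1:ℝ)/2) * u ^ ((1:ℝ)/2) = u := by
        rw [rpow_collect hu _ _ 1 (by norm_num), Real.rpow_one]
      have hMy : ∀ y ∈ Ioc (0:ℝ) (u ^ ((1:ℝ)/2)),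
          (u + y) ^ (μ₁ - lam) ≤ 3 ^ (μ₁ - lam) * u ^ ((μ₁ - lam)/2) := by
        intro y hy
        have h3w : u + y ≤ 3 * u ^ ((1:ℝ)/2) := by nlinarith [hy.2, hw0, hw2, hww]
        calc (u + y) ^ (μ₁ - lam) ≤ (3 * u ^ ((1:ℝ)/2)) ^ (μ₁ - lam) :=
              Real.rpow_le_rpow (by linarith [hy.1]) h3w (by linarith)
          _ = 3 ^ (μ₁ - lam) * u ^ ((μ₁ - lam)/2) := by
              rw [Real.mul_rpow (by norm_num) hw0.le, rpow_rpow_half hu]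
      have hb := main u hu hu3 (3 ^ (μ₁ - lam) * u ^ ((μ₁ - lam)/2))
        (mul_nonneg (Real.rpow_nonneg (by norm_num) _) (Real.rpow_nonneg hu.le _)) hMy
      have heq : u ^ (-(1 + μ₁)) * (3 ^ (μ₁ - lam) * u ^ ((μ₁ - lam)/2)) * u ^ ((1:ℝ)/2)
          = 3 ^ (μ₁ - lam) * u ^ (-((1 + μ₁ + lam)/2)) := by
        rw [show u ^ (-(1 + μ₁)) * (3 ^ (μ₁ - lam) * u ^ ((μ₁ - lam)/2)) * u ^ ((1:ℝ)/2)
            = 3 ^ (μ₁ - lam) * (u ^ (-(1 + μ₁)) * u ^ ((μ₁ - lam)/2) * u ^ ((1:ℝ)/2)) by ring,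
          rpow_collect hu (-(1 + μ₁)) ((μ₁ - lam)/2) (-(1 + μ₁) + (μ₁ - lam)/2) rfl,
          rpow_collect hu _ _ (-((1 + μ₁ + lam)/2)) (by ring)]
      rw [heq] at hb
      refine hb.trans ?_
      rw [mul_assoc]
      exact mul_le_mul_of_nonneg_left (cmp3 hu hu3 (by linarith)) (Real.rpow_nonneg (by norm_num) _)
  -- Claim 2 : far piece
  have claim2 : ∃ C2, 0 ≤ C2 ∧ ∀ u : ℝ, 0 < u → u ≤ 3 →
      (∫ y in Ioc (u ^ ((1:ℝ)/2)) R, (u + y ^ 2) ^ (-(1 + μ₁)) * (u + y) ^ (μ₁ - lam))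
        ≤ C2 * u ^ (-σp) := by
    set c3 := (3:ℝ) ^ (max 0 (μ₁ - lam)) with hc3def
    have hc30 : 0 ≤ c3 := Real.rpow_nonneg (by norm_num) _
    -- pointwise bound
    have keyP : ∀ u : ℝ, 0 < u → u ≤ 3 → ∀ y : ℝ, y ∈ Ioc (u ^ ((1:ℝ)/2)) R →
        (u + y ^ 2) ^ (-(1 + μ₁)) * (u + y) ^ (μ₁ - lam) ≤ c3 * y ^ (-(2 + μ₁ + lam)) := by
      intro u hu hu3 y hy
      have hw0 : 0 < u ^ ((1:ℝ)/2) := Real.rpow_pos_of_pos hu _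
      have hy0 : 0 < y := lt_trans hw0 hy.1
      have hw2 : u ^ ((1:ℝ)/2) ≤ 2 := half_pow_le hu hu3
      have hu2y : u ≤ 2 * y := by
        have h := rpow_collect hu ((1:ℝ)/2) ((1:ℝ)/2) 1 (by norm_num)
        rw [Real.rpow_one] at h
        nlinarith [hy.1, hw0, hw2]
      have hf1 : (u + y ^ 2) ^ (-(1 + μ₁)) ≤ y ^ (-(2 + 2*μ₁)) := by
        have : (u + y ^ 2) ^ (-(1 + μ₁)) ≤ (y ^ 2) ^ (-(1 + μ₁)) :=
          Real.rpow_le_rpow_of_nonpos (by positivity) (by linarith) (by linarith)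
        rw [sq_rpow hy0.le] at this
        refine this.trans (le_of_eq ?_)
        congr 1; ring
      have hf2 : (u + y) ^ (μ₁ - lam) ≤ c3 * y ^ (μ₁ - lam) := by
        rcases le_or_gt μ₁ lam with hc | hc
        · have h1 : (u + y) ^ (μ₁ - lam) ≤ y ^ (μ₁ - lam) :=
            Real.rpow_le_rpow_of_nonpos hy0 (by linarith) (by linarith)
          refine h1.trans ?_
          have : (1:ℝ) ≤ c3 := by
            rw [hc3def]; exact Real.one_le_rpow (by norm_num) (le_max_left _ _)
          nlinarith [Real.rpow_nonneg hy0.le (μ₁ - lam)]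
        · have h1 : (u + y) ^ (μ₁ - lam) ≤ (3 * y) ^ (μ₁ - lam) :=
            Real.rpow_le_rpow (by linarith) (by linarith) (by linarith)
          refine h1.trans (le_of_eq ?_)
          rw [Real.mul_rpow (by norm_num) hy0.le, hc3def, max_eq_right (by linarith : (0:ℝ) ≤ μ₁ - lam)]
      calc (u + y ^ 2) ^ (-(1 + μ₁)) * (u + y) ^ (μ₁ - lam)
          ≤ y ^ (-(2 + 2*μ₁)) * (c3 * y ^ (μ₁ - lam)) :=
            mul_le_mul hf1 hf2 (Real.rpow_nonneg (by linarith) _) (Real.rpow_nonneg hy0.le _)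
        _ = c3 * y ^ (-(2 + μ₁ + lam)) := by
            rw [show y ^ (-(2 + 2*μ₁)) * (c3 * y ^ (μ₁ - lam)) = c3 * (y ^ (-(2 + 2*μ₁)) * y ^ (μ₁ - lam)) by ring,
              rpow_collect hy0 _ _ (-(2 + μ₁ + lam)) (by ring)]
    -- integrability of the majorant on (w, R]
    have hintM0 : ∀ u : ℝ, 0 < u → ∀ q : ℝ, IntegrableOn (fun y : ℝ => y ^ (-q)) (Ioc (u ^ ((1:ℝ)/2)) R) := by
      intro u hu q
      have hw0 : 0 < u ^ ((1:ℝ)/2) := Real.rpow_pos_of_pos hu _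
      rcases le_or_gt (u ^ ((1:ℝ)/2)) R with hcase | hcase
      · refine ((intervalIntegral.intervalIntegrable_rpow (a := u ^ ((1:ℝ)/2)) (b := R) (Or.inr ?_)).1)
        rw [Set.uIcc_of_le hcase]
        intro hmem; exact absurd hmem.1 (by linarith)
      · rw [Ioc_eq_empty (by linarith)]
        simp [IntegrableOn]
    have hintM : ∀ u : ℝ, 0 < u → ∀ q : ℝ, IntegrableOn (fun y : ℝ => c3 * y ^ (-q)) (Ioc (u ^ ((1:ℝ)/2)) R) :=
      fun u hu q => (hintM0 u hu q).const_mul c3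
    have mono : ∀ u : ℝ, 0 < u → u ≤ 3 → ∀ q : ℝ, (∀ y ∈ Ioc (u ^ ((1:ℝ)/2)) R,
          c3 * y ^ (-(2 + μ₁ + lam)) ≤ c3 * y ^ (-q)) →
        (∫ y in Ioc (u ^ ((1:ℝ)/2)) R, (u + y ^ 2) ^ (-(1 + μ₁)) * (u + y) ^ (μ₁ - lam))
          ≤ c3 * ∫ y in Ioc (u ^ ((1:ℝ)/2)) R, y ^ (-q) := by
      intro u hu hu3 q hq
      have hw0 : 0 < u ^ ((1:ℝ)/2) := Real.rpow_pos_of_pos hu _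
      rw [← integral_const_mul]
      refine integral_mono_of_nonneg
        ((ae_restrict_mem measurableSet_Ioc).mono fun y hy =>
          mul_nonneg (Real.rpow_nonneg (by positivity) _)
            (Real.rpow_nonneg (by nlinarith [hy.1]) _))
        (hintM u hu q)
        ((ae_restrict_mem measurableSet_Ioc).mono fun y hy =>
          (keyP u hu hu3 y hy).trans (hq y hy))
    rcases lt_trichotomy (2 + μ₁ + lam) 1 with hp | hp | hp
    · -- p < 1 : bounded piece
      have hden : (0:ℝ) < 1 - (2 + μ₁ + lam) := by linarith
      have hC0 : 0 ≤ c3 * (R ^ (1 - (2 + μ₁ + lam)) / (1 - (2 + μ₁ + lam))) :=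
        mul_nonneg hc30 (div_nonneg (Real.rpow_nonneg (by linarith) _) hden.le)
      refine ⟨c3 * (R ^ (1 - (2 + μ₁ + lam)) / (1 - (2 + μ₁ + lam))) * 3 ^ σp,
        mul_nonneg hC0 (Real.rpow_nonneg (by norm_num) _),
        fun u hu hu3 => ?_⟩
      have hw0 : 0 < u ^ ((1:ℝ)/2) := Real.rpow_pos_of_pos hu _
      have h1 := mono u hu hu3 (2 + μ₁ + lam) (fun y hy => le_rfl)
      have h2 := intF (w := u ^ ((1:ℝ)/2)) hw0.le hp (by linarith : (0:ℝ) < R)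
      have h3 : (∫ y in Ioc (u ^ ((1:ℝ)/2)) R, (u + y ^ 2) ^ (-(1 + μ₁)) * (u + y) ^ (μ₁ - lam))
          ≤ c3 * (R ^ (1 - (2 + μ₁ + lam)) / (1 - (2 + μ₁ + lam))) :=
        h1.trans (mul_le_mul_of_nonneg_left h2 hc30)
      refine h3.trans ?_
      have : c3 * (R ^ (1 - (2 + μ₁ + lam)) / (1 - (2 + μ₁ + lam)))
          = (c3 * (R ^ (1 - (2 + μ₁ + lam)) / (1 - (2 + μ₁ + lam)))) * u ^ (-(0:ℝ)) := by
        rw [neg_zero, Real.rpow_zero, mul_one]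
      rw [this]
      have := bump (c3 * (R ^ (1 - (2 + μ₁ + lam)) / (1 - (2 + μ₁ + lam)))) hu hu3
        hC0 hσp0
      simpa [sub_zero] using this
    · -- p = 1 : logarithmic, absorb into ε
      refine ⟨c3 * R ^ (2*ε) * (1 / (2*ε)) * 3 ^ (σp - ε), by positivity, fun u hu hu3 => ?_⟩
      have hw0 : 0 < u ^ ((1:ℝ)/2) := Real.rpow_pos_of_pos hu _
      have hq : ∀ y ∈ Ioc (u ^ ((1:ℝ)/2)) R, c3 * y ^ (-(2 + μ₁ + lam)) ≤ c3 * (R ^ (2*ε) * y ^ (-(1 + 2*ε))) := by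
        intro y hy
        have hy0 : 0 < y := lt_trans hw0 hy.1
        refine mul_le_mul_of_nonneg_left ?_ hc30
        have : y ^ (-(2 + μ₁ + lam)) = y ^ (-(1:ℝ)) := by rw [hp]
        rw [this, show (-(1:ℝ)) = 2*ε + (-(1 + 2*ε)) by ring, Real.rpow_add hy0]
        exact mul_le_mul_of_nonneg_right
          (Real.rpow_le_rpow hy0.le hy.2 (by linarith))
          (Real.rpow_nonneg hy0.le _)
      -- redo mono with modified majorant
      have h1 : (∫ y in Ioc (u ^ ((1:ℝ)/2)) R, (u + y ^ 2) ^ (-(1 + μ₁)) * (u + y) ^ (μ₁ - lam))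
          ≤ c3 * R ^ (2*ε) * ∫ y in Ioc (u ^ ((1:ℝ)/2)) R, y ^ (-(1 + 2*ε)) := by
        rw [← integral_const_mul]
        refine integral_mono_of_nonneg
          ((ae_restrict_mem measurableSet_Ioc).mono fun y hy =>
            mul_nonneg (Real.rpow_nonneg (by positivity) _)
              (Real.rpow_nonneg (by nlinarith [hy.1]) _))
          ((hintM0 u hu (1 + 2*ε)).const_mul (c3 * R ^ (2*ε)))
          ((ae_restrict_mem measurableSet_Ioc).mono fun y hy => ?_)
        have := (keyP u hu hu3 y hy).trans (hq y hy)
        calc (u + y ^ 2) ^ (-(1 + μ₁)) * (u + y) ^ (μ₁ - lam)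
            ≤ c3 * (R ^ (2*ε) * y ^ (-(1 + 2*ε))) := this
          _ = c3 * R ^ (2*ε) * y ^ (-(1 + 2*ε)) := by ring
      have h2 := intE (w := u ^ ((1:ℝ)/2)) R hw0 (by linarith : (1:ℝ) < 1 + 2*ε)
      have h3 : (u ^ ((1:ℝ)/2)) ^ (1 - (1 + 2*ε)) = u ^ (-ε) := by
        rw [rpow_rpow_half hu]; congr 1; ring
      rw [h3] at h2
      have hεσ : ε ≤ σp := by
        have : ε ≤ σ := by rw [hσdef]; linarith
        linarith
      calc (∫ y in Ioc (u ^ ((1:ℝ)/2)) R, (u + y ^ 2) ^ (-(1 + μ₁)) * (u + y) ^ (μ₁ - lam))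
          ≤ c3 * R ^ (2*ε) * (u ^ (-ε) / (1 + 2*ε - 1)) :=
            h1.trans (mul_le_mul_of_nonneg_left h2 (by positivity))
        _ = (c3 * R ^ (2*ε) * (1/(2*ε))) * u ^ (-ε) := by
            rw [show (1 + 2*ε - 1 : ℝ) = 2*ε by ring]; ring
        _ ≤ c3 * R ^ (2*ε) * (1 / (2*ε)) * 3 ^ (σp - ε) * u ^ (-σp) :=
            bump _ hu hu3 (by positivity) hεσ
    · -- p > 1
      have hden : (0:ℝ) < 2 + μ₁ + lam - 1 := by linarith
      have hC0 : 0 ≤ c3 * (1 / (2 + μ₁ + lam - 1)) :=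
        mul_nonneg hc30 (by positivity)
      refine ⟨c3 * (1 / (2 + μ₁ + lam - 1)) * 3 ^ (σp - (1 + μ₁ + lam)/2),
        mul_nonneg hC0 (Real.rpow_nonneg (by norm_num) _),
        fun u hu hu3 => ?_⟩
      have hw0 : 0 < u ^ ((1:ℝ)/2) := Real.rpow_pos_of_pos hu _
      have h1 := mono u hu hu3 (2 + μ₁ + lam) (fun y hy => le_rfl)
      have h2 := intE (w := u ^ ((1:ℝ)/2)) R hw0 hp
      have h3 : (u ^ ((1:ℝ)/2)) ^ (1 - (2 + μ₁ + lam)) = u ^ (-((1 + μ₁ + lam)/2)) := by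
        rw [rpow_rpow_half hu]; congr 1; ring
      rw [h3] at h2
      calc (∫ y in Ioc (u ^ ((1:ℝ)/2)) R, (u + y ^ 2) ^ (-(1 + μ₁)) * (u + y) ^ (μ₁ - lam))
          ≤ c3 * (u ^ (-((1 + μ₁ + lam)/2)) / (2 + μ₁ + lam - 1)) :=
            h1.trans (mul_le_mul_of_nonneg_left h2 hc30)
        _ = (c3 * (1 / (2 + μ₁ + lam - 1))) * u ^ (-((1 + μ₁ + lam)/2)) := by ring
        _ ≤ c3 * (1 / (2 + μ₁ + lam - 1)) * 3 ^ (σp - (1 + μ₁ + lam)/2) * u ^ (-σp) :=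
            bump _ hu hu3 hC0 (by linarith)
  -- assemble
  obtain ⟨C1, hC10, h1⟩ := claim1
  obtain ⟨C2, hC20, h2⟩ := claim2
  refine ⟨C1 + C2, by positivity, fun u hu hu3 => ?_⟩
  have hw0 : 0 < u ^ ((1:ℝ)/2) := Real.rpow_pos_of_pos hu _
  have hwR : u ^ ((1:ℝ)/2) ≤ R := le_trans (half_pow_le hu hu3) (by linarith)
  have hsplit : Ioc (0:ℝ) R = Ioc 0 (u ^ ((1:ℝ)/2)) ∪ Ioc (u ^ ((1:ℝ)/2)) R :=
    (Ioc_union_Ioc_eq_Ioc hw0.le hwR).symm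
  have hcont : ContinuousOn (fun y : ℝ => (u + y ^ 2) ^ (-(1 + μ₁)) * (u + y) ^ (μ₁ - lam)) (Icc 0 R) := by
    refine ContinuousOn.mul ?_ ?_
    · refine ContinuousOn.rpow_const (by fun_prop) (fun y hy => Or.inl ?_)
      have : (0:ℝ) ≤ y ^ 2 := sq_nonneg y
      positivity
    · refine ContinuousOn.rpow_const (by fun_prop) (fun y hy => Or.inl ?_)
      have := hy.1; positivity
  have hintF : IntegrableOn (fun y : ℝ => (u + y ^ 2) ^ (-(1 + μ₁)) * (u + y) ^ (μ₁ - lam)) (Icc 0 R) :=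
    hcont.integrableOn_compact isCompact_Icc
  rw [hsplit, setIntegral_union (Set.Ioc_disjoint_Ioc_of_le le_rfl) measurableSet_Ioc
    (hintF.mono_set ((Ioc_subset_Icc_self).trans (Icc_subset_Icc_right hwR)))
    (hintF.mono_set ((Ioc_subset_Icc_self).trans (Icc_subset_Icc_left hw0.le)))]
  calc _ ≤ C1 * u ^ (-σp) + C2 * u ^ (-σp) := add_le_add (h1 u hu hu3) (h2 u hu hu3)
    _ = (C1 + C2) * u ^ (-σp) := by ring

lemma lemT (m : ℕ) (hm : 1 ≤ m) (μ₁ lam ε : ℝ) (hμ₁ : 0 ≤ μ₁) (hε : 0 < ε) :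
    ∃ C, 0 ≤ C ∧ ∀ u : ℝ, 0 < u → u ≤ 3 →
      (∫ t in {t : EuclideanSpace ℝ (Fin m) | ∀ i, t i ∈ Icc (0:ℝ) 1},
        (u + ‖t‖ ^ 2) ^ (-(1 + μ₁)) * (u + ‖t‖) ^ (-((m:ℝ) - 1 + lam - μ₁)))
        ≤ C * u ^ (-(max (lam + 1 + max 0 ((μ₁ - lam - 1) / 2 + ε)) 0)) := by
  have hm1 : (1:ℝ) ≤ (m:ℝ) := by exact_mod_cast hm
  obtain ⟨CL, hCL0, hCL⟩ := lemL ((m:ℝ)+2) μ₁ lam ε (by linarith) hμ₁ hε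
  haveI : Nontrivial (EuclideanSpace ℝ (Fin m)) := by
    refine ⟨0, EuclideanSpace.single ⟨0, by omega⟩ 1, fun h => ?_⟩
    have := congrFun (congrArg (fun (f : EuclideanSpace ℝ (Fin m)) => (f : Fin m → ℝ)) h)
      ⟨0, by omega⟩
    simp [EuclideanSpace.single_apply] at this
  set Vb := (volume (Metric.ball (0 : EuclideanSpace ℝ (Fin m)) 1)).toReal with hVb
  have hVb0 : 0 ≤ Vb := ENNReal.toReal_nonneg
  refine ⟨(m * Vb) * CL,
    mul_nonneg (mul_nonneg (Nat.cast_nonneg m) hVb0) hCL0, fun u hu hu3 => ?_⟩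
  set R := (m:ℝ) + 2 with hRdef
  have hR3 : (3:ℝ) ≤ R := by rw [hRdef]; linarith
  set b := -((m:ℝ) - 1 + lam - μ₁) with hbdef
  -- continuity of the integrand
  have hfc : Continuous (fun t : EuclideanSpace ℝ (Fin m) =>
      (u + ‖t‖ ^ 2) ^ (-(1 + μ₁)) * (u + ‖t‖) ^ b) := by
    refine Continuous.mul ?_ ?_
    · refine Continuous.rpow_const (by fun_prop) (fun t => Or.inl ?_)
      have : (0:ℝ) ≤ ‖t‖ ^ 2 := sq_nonneg _
      positivity
    · refine Continuous.rpow_const (by fun_prop) (fun t => Or.inl ?_)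
      have : (0:ℝ) ≤ ‖t‖ := norm_nonneg _
      positivity
  have hf0 : ∀ t : EuclideanSpace ℝ (Fin m),
      0 ≤ (u + ‖t‖ ^ 2) ^ (-(1 + μ₁)) * (u + ‖t‖) ^ b := fun t =>
    mul_nonneg (Real.rpow_nonneg (by positivity) _) (Real.rpow_nonneg (by positivity) _)
  -- cube inside closed ball
  have hcube_sub : {t : EuclideanSpace ℝ (Fin m) | ∀ i, t i ∈ Icc (0:ℝ) 1}
      ⊆ Metric.closedBall 0 R := by
    intro t ht
    rw [Metric.mem_closedBall, dist_zero_right]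
    have h1 : ‖t‖ ^ 2 ≤ (m:ℝ) := by
      rw [EuclideanSpace.norm_eq,
        Real.sq_sqrt (Finset.sum_nonneg fun i _ => sq_nonneg _)]
      calc ∑ i, ‖t i‖ ^ 2 ≤ ∑ _i : Fin m, (1:ℝ) := by
            refine Finset.sum_le_sum fun i _ => ?_
            have h := ht i
            rw [Real.norm_eq_abs, sq_abs]
            nlinarith [h.1, h.2]
        _ = (m:ℝ) := by simp
    nlinarith [norm_nonneg t]
  -- step 1 : enlarge to closed ball
  have step1 : (∫ t in {t : EuclideanSpace ℝ (Fin m) | ∀ i, t i ∈ Icc (0:ℝ) 1},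
        (u + ‖t‖ ^ 2) ^ (-(1 + μ₁)) * (u + ‖t‖) ^ b)
      ≤ ∫ t in Metric.closedBall (0 : EuclideanSpace ℝ (Fin m)) R,
        (u + ‖t‖ ^ 2) ^ (-(1 + μ₁)) * (u + ‖t‖) ^ b :=
    setIntegral_mono_set
      (hfc.continuousOn.integrableOn_compact (isCompact_closedBall _ _))
      (Filter.Eventually.of_forall hf0)
      (HasSubset.Subset.eventuallyLE hcube_sub)
  -- step 2 : radial rewrite
  set g : ℝ → ℝ := fun y =>
    Set.indicator (Icc (0:ℝ) R) (fun y => (u + y ^ 2) ^ (-(1 + μ₁)) * (u + y) ^ b) y with hgdef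
  have step2 : (∫ t in Metric.closedBall (0 : EuclideanSpace ℝ (Fin m)) R,
        (u + ‖t‖ ^ 2) ^ (-(1 + μ₁)) * (u + ‖t‖) ^ b)
      = ∫ t : EuclideanSpace ℝ (Fin m), g ‖t‖ := by
    rw [← integral_indicator (measurableSet_closedBall)]
    congr 1; funext t
    have hmem : (t ∈ Metric.closedBall (0 : EuclideanSpace ℝ (Fin m)) R)
        ↔ (‖t‖ ∈ Icc (0:ℝ) R) := by
      rw [Metric.mem_closedBall, dist_zero_right, mem_Icc]
      exact ⟨fun h => ⟨norm_nonneg t, h⟩, fun h => h.2⟩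
    classical
    simp only [hgdef, Set.indicator_apply]
    rw [if_congr hmem rfl rfl]
  have step3 : (∫ t : EuclideanSpace ℝ (Fin m), g ‖t‖)
      = (m:ℝ) * Vb * ∫ y in Ioi (0:ℝ), y ^ (m - 1) * g y := by
    rw [integral_fun_norm_addHaar (volume : Measure (EuclideanSpace ℝ (Fin m))) g]
    simp only [finrank_euclideanSpace, Fintype.card_fin, nsmul_eq_mul, smul_eq_mul, mul_assoc, measureReal_def, ← hVb]
  have hIoiIcc : Ioi (0:ℝ) ∩ Icc 0 R = Ioc 0 R := by
    ext x; constructor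
    · rintro ⟨hx1, hx2⟩; exact ⟨hx1, hx2.2⟩
    · rintro ⟨hx1, hx2⟩; exact ⟨hx1, le_of_lt hx1, hx2⟩
  have step4 : (∫ y in Ioi (0:ℝ), y ^ (m - 1) * g y)
      = ∫ y in Ioc (0:ℝ) R, y ^ (m - 1) * ((u + y ^ 2) ^ (-(1 + μ₁)) * (u + y) ^ b) := by
    have heq : ∀ y : ℝ, y ^ (m - 1) * g y
        = Set.indicator (Icc (0:ℝ) R)
            (fun y => y ^ (m - 1) * ((u + y ^ 2) ^ (-(1 + μ₁)) * (u + y) ^ b)) y := by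
      intro y
      simp only [hgdef, Set.indicator_apply, mul_ite, mul_zero]
    simp_rw [heq]
    rw [setIntegral_indicator measurableSet_Icc, hIoiIcc]
  -- step 5 : absorb the power of y
  have hcont5 : ContinuousOn
      (fun y : ℝ => (u + y ^ 2) ^ (-(1 + μ₁)) * (u + y) ^ (μ₁ - lam)) (Icc 0 R) := by
    refine ContinuousOn.mul ?_ ?_
    · refine ContinuousOn.rpow_const (by fun_prop) (fun y _ => Or.inl ?_)
      have : (0:ℝ) ≤ y ^ 2 := sq_nonneg _
      positivity
    · refine ContinuousOn.rpow_const (by fun_prop) (fun y hy => Or.inl ?_)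
      have := hy.1; positivity
  have step5 : (∫ y in Ioc (0:ℝ) R, y ^ (m - 1) * ((u + y ^ 2) ^ (-(1 + μ₁)) * (u + y) ^ b))
      ≤ ∫ y in Ioc (0:ℝ) R, (u + y ^ 2) ^ (-(1 + μ₁)) * (u + y) ^ (μ₁ - lam) := by
    refine integral_mono_of_nonneg
      ((ae_restrict_mem measurableSet_Ioc).mono fun y hy =>
        mul_nonneg (pow_nonneg hy.1.le _)
          (mul_nonneg (Real.rpow_nonneg (by positivity) _)
            (Real.rpow_nonneg (by linarith [hy.1] : (0:ℝ) ≤ u + y) _)))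
      ((hcont5.integrableOn_compact isCompact_Icc).mono_set Ioc_subset_Icc_self)
      ((ae_restrict_mem measurableSet_Ioc).mono fun y hy => ?_)
    have hy0 : 0 < y := hy.1
    have huy : 0 < u + y := by linarith
    have h1 : y ^ (m - 1) ≤ (u + y) ^ (m - 1) := pow_le_pow_left₀ hy0.le (by linarith) _
    have h2 : (u + y) ^ (m - 1) * (u + y) ^ b = (u + y) ^ (μ₁ - lam) := by
      rw [← Real.rpow_natCast (u + y) (m - 1), Nat.cast_sub hm, Nat.cast_one,
        rpow_collect huy _ _ (μ₁ - lam) (by rw [hbdef]; ring)]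
    calc y ^ (m - 1) * ((u + y ^ 2) ^ (-(1 + μ₁)) * (u + y) ^ b)
        ≤ (u + y) ^ (m - 1) * ((u + y ^ 2) ^ (-(1 + μ₁)) * (u + y) ^ b) := by
          refine mul_le_mul_of_nonneg_right h1 ?_
          exact mul_nonneg (Real.rpow_nonneg (by positivity) _) (Real.rpow_nonneg huy.le _)
      _ = (u + y ^ 2) ^ (-(1 + μ₁)) * ((u + y) ^ (m - 1) * (u + y) ^ b) := by ring
      _ = (u + y ^ 2) ^ (-(1 + μ₁)) * (u + y) ^ (μ₁ - lam) := by rw [h2]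
  -- assemble
  calc (∫ t in {t : EuclideanSpace ℝ (Fin m) | ∀ i, t i ∈ Icc (0:ℝ) 1},
        (u + ‖t‖ ^ 2) ^ (-(1 + μ₁)) * (u + ‖t‖) ^ b)
      ≤ (m:ℝ) * Vb * ∫ y in Ioc (0:ℝ) R, y ^ (m - 1) * ((u + y ^ 2) ^ (-(1 + μ₁)) * (u + y) ^ b) := by
        rw [← step4, ← step3, ← step2]; exact step1
    _ ≤ (m:ℝ) * Vb * ∫ y in Ioc (0:ℝ) R, (u + y ^ 2) ^ (-(1 + μ₁)) * (u + y) ^ (μ₁ - lam) :=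
        mul_le_mul_of_nonneg_left step5 (mul_nonneg (Nat.cast_nonneg m) hVb0)
    _ ≤ (m:ℝ) * Vb * (CL * u ^ (-(max (lam + 1 + max 0 ((μ₁ - lam - 1) / 2 + ε)) 0))) := by
        exact mul_le_mul_of_nonneg_left (hCL u hu hu3)
          (mul_nonneg (Nat.cast_nonneg m) hVb0)
    _ = (m * Vb) * CL * u ^ (-(max (lam + 1 + max 0 ((μ₁ - lam - 1) / 2 + ε)) 0)) := by ring

/-- The integral `I(δ)` of Lemma 6.2, over `[0,1] × [0,1] × [0,1]^m`. -/
noncomputable def kernelIntegral (m : ℕ) (β μ₁ lam δ : ℝ) : ℝ :=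
  ∫ s₁ in Set.Icc (0 : ℝ) 1, ∫ s₂ in Set.Icc (0 : ℝ) 1,
    ∫ t in {t : EuclideanSpace ℝ (Fin m) | ∀ i, t i ∈ Set.Icc (0 : ℝ) 1},
      s₁ ^ β * (δ + s₁ + s₂ + ‖t‖ ^ 2) ^ (-(1 + μ₁)) *
        (δ + s₁ + s₂ + ‖t‖) ^ (-((m : ℝ) - 1 + lam - μ₁))

lemma chain (m : ℕ) (β μ₁ lam : ℝ) (hβ : 0 ≤ β) (σp τ g CT CB CC : ℝ)
    (hCT0 : 0 ≤ CT) (hCB0 : 0 ≤ CB) (hCC0 : 0 ≤ CC)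
    (hCT : ∀ u : ℝ, 0 < u → u ≤ 3 →
      (∫ t in {t : EuclideanSpace ℝ (Fin m) | ∀ i, t i ∈ Icc (0:ℝ) 1},
        (u + ‖t‖ ^ 2) ^ (-(1 + μ₁)) * (u + ‖t‖) ^ (-((m:ℝ) - 1 + lam - μ₁))) ≤ CT * u ^ (-σp))
    (hCB : ∀ v : ℝ, 0 < v → v ≤ 3 →
      (∫ s in Icc (0:ℝ) 1, (v + s) ^ (-σp)) ≤ CB * v ^ (-τ))
    (hCC : ∀ v : ℝ, 0 < v → v ≤ 3 →
      (∫ s in Icc (0:ℝ) 1, s ^ β * (v + s) ^ (-τ)) ≤ CC * v ^ (-g)) :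
    ∀ δ : ℝ, δ ∈ Set.Ioo (0:ℝ) 1 →
      kernelIntegral m β μ₁ lam δ ≤ CT * CB * CC * δ ^ (-g) := by
  intro δ hδ
  obtain ⟨hδ0, hδ1⟩ := hδ
  -- innermost bound
  have hinner : ∀ s₁ ∈ Icc (0:ℝ) 1, ∀ s₂ ∈ Icc (0:ℝ) 1,
      (∫ t in {t : EuclideanSpace ℝ (Fin m) | ∀ i, t i ∈ Icc (0:ℝ) 1},
        s₁ ^ β * (δ + s₁ + s₂ + ‖t‖ ^ 2) ^ (-(1 + μ₁)) *
          (δ + s₁ + s₂ + ‖t‖) ^ (-((m:ℝ) - 1 + lam - μ₁)))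
        ≤ s₁ ^ β * CT * (δ + s₁ + s₂) ^ (-σp) := by
    intro s₁ hs₁ s₂ hs₂
    have hu : 0 < δ + s₁ + s₂ := by linarith [hs₁.1, hs₂.1]
    have hu3 : δ + s₁ + s₂ ≤ 3 := by linarith [hs₁.2, hs₂.2]
    have heq : (∫ t in {t : EuclideanSpace ℝ (Fin m) | ∀ i, t i ∈ Icc (0:ℝ) 1},
        s₁ ^ β * (δ + s₁ + s₂ + ‖t‖ ^ 2) ^ (-(1 + μ₁)) *
          (δ + s₁ + s₂ + ‖t‖) ^ (-((m:ℝ) - 1 + lam - μ₁)))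
        = s₁ ^ β * ∫ t in {t : EuclideanSpace ℝ (Fin m) | ∀ i, t i ∈ Icc (0:ℝ) 1},
            (δ + s₁ + s₂ + ‖t‖ ^ 2) ^ (-(1 + μ₁)) *
              (δ + s₁ + s₂ + ‖t‖) ^ (-((m:ℝ) - 1 + lam - μ₁)) := by
      simp_rw [mul_assoc]
      exact integral_const_mul _ _
    rw [heq, mul_assoc]
    exact mul_le_mul_of_nonneg_left (hCT (δ + s₁ + s₂) hu hu3)
      (Real.rpow_nonneg hs₁.1 _)
  -- middle bound
  have hmiddle : ∀ s₁ ∈ Icc (0:ℝ) 1,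
      (∫ s₂ in Icc (0:ℝ) 1,
        ∫ t in {t : EuclideanSpace ℝ (Fin m) | ∀ i, t i ∈ Icc (0:ℝ) 1},
          s₁ ^ β * (δ + s₁ + s₂ + ‖t‖ ^ 2) ^ (-(1 + μ₁)) *
            (δ + s₁ + s₂ + ‖t‖) ^ (-((m:ℝ) - 1 + lam - μ₁)))
        ≤ CT * CB * (s₁ ^ β * (δ + s₁) ^ (-τ)) := by
    intro s₁ hs₁
    have hv : 0 < δ + s₁ := by linarith [hs₁.1]
    have hv3 : δ + s₁ ≤ 3 := by linarith [hs₁.2]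
    calc (∫ s₂ in Icc (0:ℝ) 1,
        ∫ t in {t : EuclideanSpace ℝ (Fin m) | ∀ i, t i ∈ Icc (0:ℝ) 1},
          s₁ ^ β * (δ + s₁ + s₂ + ‖t‖ ^ 2) ^ (-(1 + μ₁)) *
            (δ + s₁ + s₂ + ‖t‖) ^ (-((m:ℝ) - 1 + lam - μ₁)))
        ≤ ∫ s₂ in Icc (0:ℝ) 1, s₁ ^ β * CT * (δ + s₁ + s₂) ^ (-σp) := by
          refine integral_mono_of_nonneg
            ((ae_restrict_mem measurableSet_Icc).mono fun s₂ hs₂ => ?_)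
            ((integrableOn_shift_rpow (-σp) hv).const_mul (s₁ ^ β * CT))
            ((ae_restrict_mem measurableSet_Icc).mono fun s₂ hs₂ =>
              hinner s₁ hs₁ s₂ hs₂)
          refine integral_nonneg fun t => ?_
          refine mul_nonneg (mul_nonneg (Real.rpow_nonneg hs₁.1 _)
            (Real.rpow_nonneg ?_ _)) (Real.rpow_nonneg ?_ _)
          · have : (0:ℝ) ≤ ‖t‖ ^ 2 := sq_nonneg _
            nlinarith [hs₁.1, hs₂.1]
          · have : (0:ℝ) ≤ ‖t‖ := norm_nonneg _
            nlinarith [hs₁.1, hs₂.1]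
      _ = s₁ ^ β * CT * ∫ s₂ in Icc (0:ℝ) 1, (δ + s₁ + s₂) ^ (-σp) :=
          integral_const_mul _ _
      _ ≤ s₁ ^ β * CT * (CB * (δ + s₁) ^ (-τ)) :=
          mul_le_mul_of_nonneg_left (hCB (δ + s₁) hv hv3)
            (mul_nonneg (Real.rpow_nonneg hs₁.1 _) hCT0)
      _ = CT * CB * (s₁ ^ β * (δ + s₁) ^ (-τ)) := by ring
  -- outer bound
  have houter : kernelIntegral m β μ₁ lam δ
      ≤ ∫ s₁ in Icc (0:ℝ) 1, CT * CB * (s₁ ^ β * (δ + s₁) ^ (-τ)) := by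
    unfold kernelIntegral
    refine integral_mono_of_nonneg
      ((ae_restrict_mem measurableSet_Icc).mono fun s₁ hs₁ => ?_)
      (?_)
      ((ae_restrict_mem measurableSet_Icc).mono fun s₁ hs₁ => hmiddle s₁ hs₁)
    · refine integral_nonneg_of_ae
        ((ae_restrict_mem measurableSet_Icc).mono fun s₂ hs₂ => ?_)
      refine integral_nonneg fun t => ?_
      refine mul_nonneg (mul_nonneg (Real.rpow_nonneg hs₁.1 _)
        (Real.rpow_nonneg ?_ _)) (Real.rpow_nonneg ?_ _)
      · have : (0:ℝ) ≤ ‖t‖ ^ 2 := sq_nonneg _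
        nlinarith [hs₁.1, hs₂.1]
      · have : (0:ℝ) ≤ ‖t‖ := norm_nonneg _
        nlinarith [hs₁.1, hs₂.1]
    · have hbase : IntegrableOn (fun s₁ : ℝ => s₁ ^ β * (δ + s₁) ^ (-τ)) (Icc (0:ℝ) 1) := by
        refine ContinuousOn.integrableOn_compact isCompact_Icc ?_
        refine ContinuousOn.mul ?_ (contOn_shift_rpow (-τ) hδ0 _ (fun x hx => hx.1))
        exact ContinuousOn.rpow_const continuousOn_id (fun x _ => Or.inr hβ)
      exact hbase.const_mul (CT * CB)
  calc kernelIntegral m β μ₁ lam δ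
      ≤ ∫ s₁ in Icc (0:ℝ) 1, CT * CB * (s₁ ^ β * (δ + s₁) ^ (-τ)) := houter
    _ = CT * CB * ∫ s₁ in Icc (0:ℝ) 1, s₁ ^ β * (δ + s₁) ^ (-τ) := integral_const_mul _ _
    _ ≤ CT * CB * (CC * δ ^ (-g)) :=
        mul_le_mul_of_nonneg_left (hCC δ hδ0 (by linarith))
          (mul_nonneg hCT0 hCB0)
    _ = CT * CB * CC * δ ^ (-g) := by ring

/-- Integral estimate (Lemma 6.2). -/
theorem stmt2 (m : ℕ) (hm : 1 ≤ m) (β μ₁ lam ε : ℝ) (hβ : 0 ≤ β) (hμ₁ : 0 ≤ μ₁)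
    (hε : 0 < ε) (β' : ℝ) (hβ' : β' = β - lam + 1 + min 0 ((lam - μ₁ + 1) / 2 - ε)) :
    ∃ C : ℝ, ∀ δ ∈ Set.Ioo (0 : ℝ) 1,
      (β' < 0 → kernelIntegral m β μ₁ lam δ ≤ C * δ ^ β') ∧
      (0 < β' → kernelIntegral m β μ₁ lam δ ≤ C) := by
  set κ := max 0 ((μ₁ - lam - 1) / 2 + ε) with hκdef
  set σ := lam + 1 + κ with hσdef
  set σp := max σ 0 with hσpdef
  obtain ⟨CT, hCT0, hCT⟩ := lemT m hm μ₁ lam ε hμ₁ hε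
  have hmin : min (0:ℝ) ((lam - μ₁ + 1)/2 - ε) + max (0:ℝ) ((μ₁ - lam - 1)/2 + ε) = 0 := by
    rcases le_total (0:ℝ) ((lam - μ₁ + 1)/2 - ε) with h | h
    · rw [min_eq_left h, max_eq_left (by linarith)]; ring
    · rw [min_eq_right h, max_eq_right (by linarith)]; ring
  have hβ'σ : β' = β + 2 - σ := by
    rw [hβ', hσdef, hκdef]; linarith
  have hσp0 : 0 ≤ σp := le_max_right _ _
  rcases lt_trichotomy β' 0 with hb | hb | hb
  · -- β' < 0
    have hσ2 : 2 < σ := by linarith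
    have hσpσ : σp = σ := max_eq_left (by linarith)
    have hCB : ∀ v : ℝ, 0 < v → v ≤ 3 →
        (∫ s in Icc (0:ℝ) 1, (v + s) ^ (-σp)) ≤ (1/(σ-1)) * v ^ (-(σ-1)) := by
      intro v hv _
      rw [hσpσ]
      have h := intB (v := v) (r := -σ) hv (by linarith)
      rw [show (-σ + 1 : ℝ) = -(σ - 1) by ring] at h
      calc (∫ s in Icc (0:ℝ) 1, (v + s) ^ (-σ)) ≤ v ^ (-(σ-1)) / (-(-σ) - 1) := h
        _ = (1/(σ-1)) * v ^ (-(σ-1)) := by ring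
    have hCC : ∀ v : ℝ, 0 < v → v ≤ 3 →
        (∫ s in Icc (0:ℝ) 1, s ^ β * (v + s) ^ (-(σ-1))) ≤ (1/(σ-β-2)) * v ^ (-(-β')) := by
      intro v hv _
      have h := intC (v := v) (p := β) (q := σ - 1) hv hβ (by linarith)
      rw [show (β + 1 - (σ - 1) : ℝ) = -(-β') by linarith] at h
      calc (∫ s in Icc (0:ℝ) 1, s ^ β * (v + s) ^ (-(σ-1)))
          ≤ v ^ (-(-β')) / (σ - 1 - β - 1) := h
        _ = (1/(σ-β-2)) * v ^ (-(-β')) := by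
            rw [show (σ - 1 - β - 1 : ℝ) = σ - β - 2 by ring]; ring
    have key := chain m β μ₁ lam hβ σp (σ-1) (-β') CT (1/(σ-1)) (1/(σ-β-2))
      hCT0 (le_of_lt (div_pos one_pos (by linarith)))
      (le_of_lt (div_pos one_pos (by linarith))) hCT hCB hCC
    refine ⟨CT * (1/(σ-1)) * (1/(σ-β-2)), fun δ hδ =>
      ⟨fun _ => ?_, fun h' => absurd h' (by linarith)⟩⟩
    have h := key δ hδ
    rwa [neg_neg] at h
  · -- β' = 0
    exact ⟨0, fun δ _ => ⟨fun h => absurd h (by linarith), fun h => absurd h (by linarith)⟩⟩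
  · -- 0 < β'
    have hσβ2 : σ < β + 2 := by linarith
    have hσp_lt : σp < β + 2 := max_lt (by linarith) (by linarith)
    obtain ⟨CB, τ, hCB0, hτ0, hτβ, hCB⟩ :
        ∃ CB τ : ℝ, 0 ≤ CB ∧ 0 ≤ τ ∧ τ < β + 1 ∧ ∀ v : ℝ, 0 < v → v ≤ 3 →
          (∫ s in Icc (0:ℝ) 1, (v + s) ^ (-σp)) ≤ CB * v ^ (-τ) := by
      rcases lt_trichotomy σp 1 with h1 | h1 | h1
      · refine ⟨1/(-σp+1), 0, le_of_lt (div_pos one_pos (by linarith)), le_rfl,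
          by linarith, fun v hv _ => ?_⟩
        rw [neg_zero, Real.rpow_zero, mul_one]
        exact intB_lt hv hσp0 h1
      · refine ⟨2, 1/2, by norm_num, by norm_num, by linarith, fun v hv _ => ?_⟩
        simp only [h1]
        exact intB_eq hv
      · refine ⟨1/(σp-1), σp-1, le_of_lt (div_pos one_pos (by linarith)), by linarith,
          by linarith, fun v hv _ => ?_⟩
        have h := intB (v := v) (r := -σp) hv (by linarith)
        rw [show (-σp + 1 : ℝ) = -(σp - 1) by ring] at h
        calc (∫ s in Icc (0:ℝ) 1, (v + s) ^ (-σp)) ≤ v ^ (-(σp-1)) / (-(-σp) - 1) := h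
          _ = (1/(σp-1)) * v ^ (-(σp-1)) := by ring
    have hCC : ∀ v : ℝ, 0 < v → v ≤ 3 →
        (∫ s in Icc (0:ℝ) 1, s ^ β * (v + s) ^ (-τ)) ≤ (1/(β-τ+1)) * v ^ (-(0:ℝ)) := by
      intro v hv _
      rw [neg_zero, Real.rpow_zero, mul_one]
      exact intD hv hβ hτ0 hτβ
    have key := chain m β μ₁ lam hβ σp τ 0 CT CB (1/(β-τ+1))
      hCT0 hCB0 (le_of_lt (div_pos one_pos (by linarith))) hCT hCB hCC
    refine ⟨CT * CB * (1/(β-τ+1)), fun δ hδ =>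
      ⟨fun h' => absurd h' (by linarith), fun _ => ?_⟩⟩
    have h := key δ hδ
    rwa [neg_zero, Real.rpow_zero, mul_one] at h
end

section
/- Localization of ∂D¹ ∩ D³ in the concave configuration (first assertion of (4.13) in Lemma 4.2(c)): Let n ≥ 1, 1 ≤ q ≤ n − 2, r₃ > 0, let λ_j ∈ [−1,1] for q+3 ≤ j ≤ n, and let R : ℂⁿ → ℝ satisfy |R(z)| ≤ |z|²/4 for every z ∈ ℂⁿ. Define ρ¹(z) = −Im z_{q+2} − Σ_{j=1}^{q+2} |z_j|² + Σ_{j=q+3}^{n} λ_j |z_j|² + R(z) and ρ³(z) = −Im z_{q+2} + 3 Σ_{j=q+3}^{n} |z_j|² − r₃². Then every z ∈ ℂⁿ with ρ¹(z) = 0 and ρ³(z) < 0 satisfies |z| < 2 r₃. -/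
open Complex

/-- Localization of `∂D¹ ∩ D³` in the concave configuration (first assertion of (4.13)
in Lemma 4.2(c)).  Coordinates are 0-indexed: `z_{q+2}` (1-indexed) is the coordinate
with index `q + 1`, the range `1 ≤ j ≤ q+2` corresponds to `(j : ℕ) < q + 2`, and the
range `q+3 ≤ j ≤ n` corresponds to `q + 2 ≤ (j : ℕ)`. -/
theorem stmt7 (n q : ℕ) (hn : 1 ≤ n) (hq1 : 1 ≤ q) (hqn : q ≤ n - 2) (r₃ : ℝ) (hr₃ : 0 < r₃)
    (lam : Fin n → ℝ) (hlam : ∀ j : Fin n, q + 2 ≤ (j : ℕ) → |lam j| ≤ 1)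
    (R : EuclideanSpace ℂ (Fin n) → ℝ) (hR : ∀ z, |R z| ≤ ‖z‖ ^ 2 / 4)
    (ρ₁ ρ₃ : EuclideanSpace ℂ (Fin n) → ℝ)
    (hρ₁ : ∀ z, ρ₁ z = -(z ⟨q + 1, by omega⟩).im -
        ∑ j : Fin n, (if (j : ℕ) < q + 2 then ‖z j‖ ^ 2 else 0) +
        ∑ j : Fin n, (if q + 2 ≤ (j : ℕ) then lam j * ‖z j‖ ^ 2 else 0) + R z)
    (hρ₃ : ∀ z, ρ₃ z = -(z ⟨q + 1, by omega⟩).im +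
        3 * ∑ j : Fin n, (if q + 2 ≤ (j : ℕ) then ‖z j‖ ^ 2 else 0) - r₃ ^ 2) :
    ∀ z : EuclideanSpace ℂ (Fin n), ρ₁ z = 0 → ρ₃ z < 0 → ‖z‖ < 2 * r₃ := by
  intro z h1 h3
  rw [hρ₁ z] at h1
  rw [hρ₃ z] at h3
  set A := ∑ j : Fin n, (if (j : ℕ) < q + 2 then ‖z j‖ ^ 2 else 0) with hA
  set B := ∑ j : Fin n, (if q + 2 ≤ (j : ℕ) then ‖z j‖ ^ 2 else 0) with hB
  set L := ∑ j : Fin n, (if q + 2 ≤ (j : ℕ) then lam j * ‖z j‖ ^ 2 else 0) with hL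
  have hA0 : 0 ≤ A := Finset.sum_nonneg fun j _ => by positivity
  have hB0 : 0 ≤ B := Finset.sum_nonneg fun j _ => by positivity
  have hnorm : ‖z‖ ^ 2 = A + B := by
    rw [hA, hB, ← Finset.sum_add_distrib]
    rw [EuclideanSpace.norm_eq, Real.sq_sqrt (Finset.sum_nonneg fun j _ => by positivity)]
    refine Finset.sum_congr rfl fun j _ => ?_
    by_cases h : (j : ℕ) < q + 2
    · simp [h, Nat.not_le.mpr h]
    · simp [h, Nat.le_of_not_lt h]
  have hLB : L ≤ B := by
    refine Finset.sum_le_sum fun j _ => ?_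
    by_cases h : q + 2 ≤ (j : ℕ)
    · simp only [h, if_true]
      calc lam j * ‖z j‖ ^ 2 ≤ |lam j| * ‖z j‖ ^ 2 :=
            mul_le_mul_of_nonneg_right (le_abs_self _) (by positivity)
        _ ≤ 1 * ‖z j‖ ^ 2 := by gcongr; exact hlam j h
        _ = ‖z j‖ ^ 2 := one_mul _
    · simp [h]
  have hRz := (abs_le.mp (hR z)).2
  have key : ‖z‖ ^ 2 < 4 / 3 * r₃ ^ 2 := by nlinarith [hnorm, hLB, hRz, h1, h3]
  have h2 : ‖z‖ ^ 2 < (2 * r₃) ^ 2 := by nlinarith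
  exact lt_of_pow_lt_pow_left₀ 2 (by positivity) h2
end

section
/- Nonemptiness of the parameter interval (9.26) in the Nash–Moser iteration: Let s and r be real numbers with s ≥ 2 and r > s + 5/2, and set r_* = r − 1 + min(0, 7/2 − s). Then r_* > 0 and 1 + 1/r_* < s(r−1)/(r + 5/2 − s). Consequently there exists a real number d with 1 + 1/r_* < d < s(r−1)/(r + 5/2 − s). -/
/-- Nonemptiness of the parameter interval (9.26) in the Nash–Moser iteration,
with `r_* = r − 1 + min 0 (7/2 − s)`. -/
theorem stmt13 (s r : ℝ) (hs : 2 ≤ s) (hr : s + 5 / 2 < r) :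
    0 < r - 1 + min 0 (7 / 2 - s) ∧
    1 + 1 / (r - 1 + min 0 (7 / 2 - s)) < s * (r - 1) / (r + 5 / 2 - s) ∧
    ∃ d : ℝ, 1 + 1 / (r - 1 + min 0 (7 / 2 - s)) < d ∧ d < s * (r - 1) / (r + 5 / 2 - s) := by
  have hA : 0 < r + 5 / 2 - s := by linarith
  rcases le_or_gt s (7 / 2) with h | h
  · rw [min_eq_left (by linarith : (0:ℝ) ≤ 7 / 2 - s)]
    have h1 : (0:ℝ) < r - 1 + 0 := by linarith
    have key : 1 + 1 / (r - 1 + 0) < s * (r - 1) / (r + 5 / 2 - s) := by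
      have h2 : 1 + 1 / (r - 1 + 0) = r / (r - 1) := by
        have hne : r - 1 ≠ 0 := by linarith
        rw [add_zero]; field_simp; ring
      rw [h2, div_lt_div_iff₀ (by linarith) hA]
      nlinarith [mul_nonneg (by linarith : (0:ℝ) ≤ s - 2)
          (by nlinarith : (0:ℝ) ≤ (r - 1) ^ 2 + r),
        mul_pos (by linarith : (0:ℝ) < r - 4) (by linarith : (0:ℝ) < r - 1 / 2)]
    exact ⟨h1, key, exists_between key⟩
  · rw [min_eq_right (by linarith : (7:ℝ) / 2 - s ≤ 0)]
    have h1 : (0:ℝ) < r - 1 + (7 / 2 - s) := by linarith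
    have key : 1 + 1 / (r - 1 + (7 / 2 - s)) < s * (r - 1) / (r + 5 / 2 - s) := by
      have h2 : 1 + 1 / (r - 1 + (7 / 2 - s)) = (r + 7 / 2 - s) / (r + 5 / 2 - s) := by
        have hne : r + 5 / 2 - s ≠ 0 := ne_of_gt hA
        have h3 : r - 1 + (7 / 2 - s) = r + 5 / 2 - s := by ring
        rw [h3, one_add_div hne]; ring_nf
      rw [h2, div_lt_div_iff₀ hA hA]
      nlinarith [mul_pos (by linarith : (0:ℝ) < s - 1) (by linarith : (0:ℝ) < r - 6)]
    exact ⟨h1, key, exists_between key⟩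
end
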